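/- arXiv:2512.24001 — 2 statements merged into one kernel-verified Lean document; each statement's English description precedes it below -/
import Mathlib

section
/- Every finite cubic graph G contains two disjoint 2-packings X and Y such that the induced subgraph on V(G) \ (X ∪ Y) is triangle-free. -/
set_option linter.unusedSectionVars false
set_option maxHeartbeats 1000000

def IsCubic {V : Type*} [Fintype V] (G : SimpleGraph V) [DecidableRel G.Adj] : Prop :=
  ∀ v : V, G.degree v = 3

def IsTriangle {V : Type*} (G : SimpleGraph V) (a b c : V) : Prop :=
  G.Adj a b ∧ G.Adj a c ∧ G.Adj b c

def TwoPacking {V : Type*} (G : SimpleGraph V) (S : Set V) : Prop :=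
  ∀ u ∈ S, ∀ v ∈ S, u ≠ v → 2 < G.edist u v

namespace CubicPack
open SimpleGraph Finset
open scoped Classical

variable {V : Type*} [Fintype V] [DecidableEq V] (G : SimpleGraph V) [DecidableRel G.Adj]

lemma edist_le_two_iff {u v : V} :
    G.edist u v ≤ 2 ↔ u = v ∨ G.Adj u v ∨ ∃ w, G.Adj u w ∧ G.Adj w v := by
  constructor
  · intro h
    have hne : G.edist u v ≠ ⊤ := fun ht => by simp [ht] at h
    obtain ⟨p, hp⟩ := exists_walk_of_edist_ne_top hne
    have hlen : (p.length : ℕ∞) ≤ 2 := hp ▸ h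
    have hlen' : p.length ≤ 2 := by exact_mod_cast hlen
    cases p with
    | nil => exact Or.inl rfl
    | cons h1 q =>
      cases q with
      | nil => exact Or.inr (Or.inl h1)
      | cons h2 r =>
        cases r with
        | nil => exact Or.inr (Or.inr ⟨_, h1, h2⟩)
        | cons h3 s =>
          simp only [Walk.length_cons] at hlen'
          omega
  · rintro (rfl | h | ⟨w, h1, h2⟩)
    · simp
    · rw [← edist_eq_one_iff_adj] at h; rw [h]; norm_num
    · calc G.edist u v ≤ G.edist u w + G.edist w v := SimpleGraph.edist_triangle
        _ ≤ 1 + 1 := by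
            gcongr <;> simp [edist_eq_one_iff_adj.mpr, h1, h2, le_of_eq]
        _ = 2 := by norm_num

/-- A triangle block: a triangle not sharing an edge with another triangle. -/
def IsBlk (s : Finset V) : Prop :=
  (∃ a b c : V, a ≠ b ∧ a ≠ c ∧ b ≠ c ∧ G.Adj a b ∧ G.Adj a c ∧ G.Adj b c ∧ s = {a, b, c}) ∧
  ∀ z ∉ s, ¬ (∃ x ∈ s, ∃ y ∈ s, x ≠ y ∧ G.Adj z x ∧ G.Adj z y)

lemma blk_mem {s : Finset V} (hs : IsBlk G s) {x : V} (hx : x ∈ s) :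
    ∃ b c : V, b ≠ c ∧ x ≠ b ∧ x ≠ c ∧ G.Adj x b ∧ G.Adj x c ∧ G.Adj b c ∧ s = {x, b, c} := by
  obtain ⟨⟨a, b, c, hab, hac, hbc, Hab, Hac, Hbc, rfl⟩, _⟩ := hs
  simp only [mem_insert, mem_singleton] at hx
  rcases hx with rfl | rfl | rfl
  · exact ⟨b, c, hbc, hab, hac, Hab, Hac, Hbc, rfl⟩
  · refine ⟨a, c, hac, Ne.symm hab, hbc, Hab.symm, Hbc, Hac, ?_⟩
    · ext y; simp; tauto
  · refine ⟨a, b, hab, Ne.symm hac, Ne.symm hbc, Hac.symm, Hbc.symm, Hab, ?_⟩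
    · ext y; simp; tauto

lemma nbr_eq (hc : IsCubic G) {a b c d : V} (hab : G.Adj a b) (hac : G.Adj a c)
    (had : G.Adj a d) (hbc : b ≠ c) (hbd : b ≠ d) (hcd : c ≠ d) :
    ∀ x, G.Adj a x ↔ x = b ∨ x = c ∨ x = d := by
  have hsub : ({b, c, d} : Finset V) ⊆ G.neighborFinset a := by
    intro x hx
    simp only [mem_insert, mem_singleton] at hx
    rw [mem_neighborFinset]
    rcases hx with rfl | rfl | rfl <;> assumption
  have hcard : ({b, c, d} : Finset V).card = 3 := by
    rw [card_insert_of_notMem (by simp [hbc, hbd]), card_insert_of_notMem (by simp [hcd]),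
      card_singleton]
  have heq : G.neighborFinset a = ({b, c, d} : Finset V) := by
    apply (Finset.eq_of_subset_of_card_le hsub _).symm
    rw [hcard]
    have : (G.neighborFinset a).card = 3 := by
      rw [← hc a]; rfl
    omega
  intro x
  rw [← mem_neighborFinset, heq]
  simp


lemma third_nbr (hc : IsCubic G) {x b c : V} (hxb : G.Adj x b) (hxc : G.Adj x c)
    (hbc : b ≠ c) : ∃ e, G.Adj x e ∧ e ≠ b ∧ e ≠ c := by
  by_contra h
  push_neg at h
  have hsub : G.neighborFinset x ⊆ ({b, c} : Finset V) := by
    intro y hy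
    rw [mem_neighborFinset] at hy
    by_cases hyb : y = b
    · simp [hyb]
    · simp [h y hy hyb]
  have h1 : (G.neighborFinset x).card = 3 := by rw [← hc x]; rfl
  have h2 := Finset.card_le_card hsub
  have h3 : ({b, c} : Finset V).card ≤ 2 := card_insert_le _ _ |>.trans (by simp)
  omega

lemma blk_unique (hc : IsCubic G) {s t : Finset V} (hs : IsBlk G s) (ht : IsBlk G t)
    {x : V} (hxs : x ∈ s) (hxt : x ∈ t) : s = t := by
  obtain ⟨b, c, hbc, hxb, hxc, Hxb, Hxc, Hbc, rfl⟩ := blk_mem G hs hxs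
  obtain ⟨b', c', hbc', hxb', hxc', Hxb', Hxc', Hbc', rfl⟩ := blk_mem G ht hxt
  obtain ⟨e, He, heb, hec⟩ := third_nbr G hc Hxb Hxc hbc
  have hchar := nbr_eq G hc Hxb Hxc He hbc heb.symm hec.symm
  have hes : e ∉ ({x, b, c} : Finset V) := by
    simp only [mem_insert, mem_singleton]
    push_neg
    exact ⟨G.ne_of_adj He |>.symm, heb, hec⟩
  have hb' : b' = b ∨ b' = c ∨ b' = e := (hchar b').mp Hxb'
  have hc' : c' = b ∨ c' = c ∨ c' = e := (hchar c').mp Hxc'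
  have hblk := hs.2 e hes
  have hxmem : x ∈ ({x, b, c} : Finset V) := by simp
  have key : ∀ u, u ≠ x → u ∈ ({x, b, c} : Finset V) → ¬ G.Adj e u := by
    intro u hux hu hadj
    exact hblk ⟨u, hu, x, hxmem, hux, hadj, He.symm⟩
  rcases hb' with hb1 | hb1 | hb1 <;> rcases hc' with hc1 | hc1 | hc1
  · exact absurd (hb1.trans hc1.symm) hbc'
  · subst hb1; subst hc1; rfl
  · exact absurd (by rw [← hc1]; exact Hbc') (key b' (Ne.symm hxb') (by simp [hb1]) ∘ SimpleGraph.Adj.symm)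
  · subst hb1; subst hc1; ext y; simp; tauto
  · exact absurd (hb1.trans hc1.symm) hbc'
  · exact absurd (by rw [← hc1]; exact Hbc') (key b' (Ne.symm hxb') (by simp [hb1]) ∘ SimpleGraph.Adj.symm)
  · exact absurd (by rw [← hb1]; exact Hbc') (key c' (Ne.symm hxc') (by simp [hc1]))
  · exact absurd (by rw [← hb1]; exact Hbc') (key c' (Ne.symm hxc') (by simp [hc1]))
  · exact absurd (hb1.trans hc1.symm) hbc'

/-- The unique external neighbour of a vertex of a triangle block. -/
noncomputable def extv (x : V) : V :=
  if h : ∃ e, G.Adj x e ∧ ∀ s, IsBlk G s → x ∈ s → e ∉ s then h.choose else x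

lemma extv_spec (hc : IsCubic G) {s : Finset V} (hs : IsBlk G s) {x : V} (hx : x ∈ s) :
    G.Adj x (extv G x) ∧ extv G x ∉ s := by
  obtain ⟨b, c, hbc, hxb, hxc, Hxb, Hxc, Hbc, hseq⟩ := blk_mem G hs hx
  obtain ⟨e, He, heb, hec⟩ := third_nbr G hc Hxb Hxc hbc
  have hes : e ∉ s := by
    rw [hseq]
    simp only [mem_insert, mem_singleton]
    push_neg
    exact ⟨G.ne_of_adj He |>.symm, heb, hec⟩
  have hex : ∃ e, G.Adj x e ∧ ∀ t, IsBlk G t → x ∈ t → e ∉ t := by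
    refine ⟨e, He, fun t htblk hxt => ?_⟩
    rwa [← blk_unique G hc hs htblk hx hxt]
  rw [extv, dif_pos hex]
  exact ⟨hex.choose_spec.1, hex.choose_spec.2 s hs hx⟩

lemma extv_uniq (hc : IsCubic G) {s : Finset V} (hs : IsBlk G s) {x : V} (hx : x ∈ s)
    {e : V} (he : G.Adj x e) (hes : e ∉ s) : e = extv G x := by
  obtain ⟨b, c, hbc, hxb, hxc, Hxb, Hxc, Hbc, hseq⟩ := blk_mem G hs hx
  obtain ⟨hadj, hnm⟩ := extv_spec G hc hs hx
  have hne_b : extv G x ≠ b := fun h => hnm (by rw [hseq, h]; simp)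
  have hne_c : extv G x ≠ c := fun h => hnm (by rw [hseq, h]; simp)
  have hchar := nbr_eq G hc Hxb Hxc hadj hbc hne_b.symm hne_c.symm
  rcases (hchar e).mp he with rfl | rfl | h
  · exact absurd (by rw [hseq]; simp) hes
  · exact absurd (by rw [hseq]; simp) hes
  · exact h

/-- Neighbourhood characterisation for a block vertex. -/
lemma blk_nbr (hc : IsCubic G) {s : Finset V} (hs : IsBlk G s) {x : V} (hx : x ∈ s) :
    ∀ y, G.Adj x y ↔ ((y ∈ s ∧ y ≠ x) ∨ y = extv G x) := by
  intro y
  constructor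
  · intro hy
    by_cases hys : y ∈ s
    · exact Or.inl ⟨hys, (G.ne_of_adj hy).symm⟩
    · exact Or.inr (extv_uniq G hc hs hx hy hys)
  · rintro (⟨hys, hyx⟩ | rfl)
    · obtain ⟨b, c, hbc, hxb, hxc, Hxb, Hxc, Hbc, hseq⟩ := blk_mem G hs hx
      rw [hseq] at hys
      simp only [mem_insert, mem_singleton] at hys
      rcases hys with rfl | rfl | rfl
      · exact absurd rfl hyx
      · exact Hxb
      · exact Hxc
    · exact (extv_spec G hc hs hx).1

lemma blk_ext_inj (hc : IsCubic G) {s : Finset V} (hs : IsBlk G s) {x y : V} (hx : x ∈ s)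
    (hy : y ∈ s) (hxy : x ≠ y) : extv G x ≠ extv G y := by
  intro h
  obtain ⟨hax, hnx⟩ := extv_spec G hc hs hx
  obtain ⟨hay, hny⟩ := extv_spec G hc hs hy
  exact hs.2 (extv G x) hnx ⟨x, hx, y, hy, hxy, hax.symm, h ▸ hay.symm⟩


/-- Strengthened: the neighbour finset equals the explicit 3-element set. -/
lemma nbrF_eq (hc : IsCubic G) {a b c d : V} (hab : G.Adj a b) (hac : G.Adj a c)
    (had : G.Adj a d) (hbc : b ≠ c) (hbd : b ≠ d) (hcd : c ≠ d) :
    G.neighborFinset a = {b, c, d} := by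
  have hsub : ({b, c, d} : Finset V) ⊆ G.neighborFinset a := by
    intro x hx
    simp only [mem_insert, mem_singleton] at hx
    rw [mem_neighborFinset]
    rcases hx with rfl | rfl | rfl <;> assumption
  have hcard : ({b, c, d} : Finset V).card = 3 := by
    rw [card_insert_of_notMem (by simp [hbc, hbd]), card_insert_of_notMem (by simp [hcd]),
      card_singleton]
  apply Finset.eq_of_subset_of_card_le hsub _ |>.symm
  rw [hcard]
  have : (G.neighborFinset a).card = 3 := by rw [← hc a]; rfl
  omega

/-- `a` is an apex of a diamond: `a,b` the shared edge, `c,d` the two outer vertices. -/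
def Apex (a : V) : Prop :=
  ∃ b c d, G.Adj a b ∧ G.Adj a c ∧ G.Adj a d ∧ G.Adj b c ∧ G.Adj b d ∧ ¬ G.Adj c d ∧ c ≠ d

/-- `v` is an outer vertex of a diamond. -/
def CRole (v : V) : Prop :=
  ∃ a b d, G.Adj a b ∧ G.Adj a v ∧ G.Adj b v ∧ G.Adj a d ∧ G.Adj b d ∧ ¬ G.Adj v d ∧ v ≠ d

def InK4 (v : V) : Prop :=
  ∃ b c d, b ≠ c ∧ b ≠ d ∧ c ≠ d ∧ G.Adj v b ∧ G.Adj v c ∧ G.Adj v d ∧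
    G.Adj b c ∧ G.Adj b d ∧ G.Adj c d

lemma pair_cases {x y q r : V} (hxy : x ≠ y) (hx : x = q ∨ x = r) (hy : y = q ∨ y = r) :
    (x = q ∧ y = r) ∨ (x = r ∧ y = q) := by
  rcases hx with rfl | rfl
  · rcases hy with rfl | rfl
    · exact absurd rfl hxy
    · exact Or.inl ⟨rfl, rfl⟩
  · rcases hy with rfl | rfl
    · exact Or.inr ⟨rfl, rfl⟩
    · exact absurd rfl hxy

lemma apex_wits_unique (hc : IsCubic G) {a b c d b' c' d' : V}
    (h1 : G.Adj a b) (h2 : G.Adj a c) (h3 : G.Adj a d) (h4 : G.Adj b c) (h5 : G.Adj b d)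
    (h6 : ¬ G.Adj c d) (h7 : c ≠ d)
    (h1' : G.Adj a b') (h2' : G.Adj a c') (h3' : G.Adj a d') (h4' : G.Adj b' c')
    (h5' : G.Adj b' d') (h6' : ¬ G.Adj c' d') (h7' : c' ≠ d') : b' = b := by
  have hbc : b ≠ c := G.ne_of_adj h4
  have hbd : b ≠ d := G.ne_of_adj h5
  have hchar := nbr_eq G hc h1 h2 h3 hbc hbd h7
  have hb' := (hchar b').mp h1'
  have hcc' := (hchar c').mp h2'
  have hdd' := (hchar d').mp h3'
  have hb'c' : b' ≠ c' := G.ne_of_adj h4'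
  have hb'd' : b' ≠ d' := G.ne_of_adj h5'
  rcases hb' with rfl | rfl | rfl
  · rfl
  · exfalso
    have hc2 : c' = b ∨ c' = d := by tauto
    have hd2 : d' = b ∨ d' = d := by tauto
    rcases pair_cases h7' hc2 hd2 with ⟨rfl, rfl⟩ | ⟨rfl, rfl⟩
    · exact h6' h5
    · exact h6' h5.symm
  · exfalso
    have hc2 : c' = b ∨ c' = c := by tauto
    have hd2 : d' = b ∨ d' = c := by tauto
    rcases pair_cases h7' hc2 hd2 with ⟨rfl, rfl⟩ | ⟨rfl, rfl⟩
    · exact h6' h4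
    · exact h6' h4.symm

noncomputable def coapex (a : V) : V :=
  if h : Apex G a then h.choose else a

lemma coapex_eq (hc : IsCubic G) {a b c d : V}
    (h1 : G.Adj a b) (h2 : G.Adj a c) (h3 : G.Adj a d) (h4 : G.Adj b c) (h5 : G.Adj b d)
    (h6 : ¬ G.Adj c d) (h7 : c ≠ d) : coapex G a = b := by
  have hap : Apex G a := ⟨b, c, d, h1, h2, h3, h4, h5, h6, h7⟩
  rw [coapex, dif_pos hap]
  obtain ⟨c', d', k1, k2, k3, k4, k5, k6, k7⟩ := hap.choose_spec
  exact apex_wits_unique G hc h1 h2 h3 h4 h5 h6 h7 k1 k2 k3 k4 k5 k6 k7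

lemma apex_not_crole (hc : IsCubic G) {v : V} (hap : Apex G v) (hcr : CRole G v) : False := by
  obtain ⟨a, b, d, j1, j2, j3, j4, j5, j6, j7⟩ := hcr
  obtain ⟨e, he, hea, heb⟩ := third_nbr G hc j2.symm j3.symm (G.ne_of_adj j1)
  have hNa := nbr_eq G hc j1 j2 j4 (G.ne_of_adj j3) (G.ne_of_adj j5) j7
  have hNb := nbr_eq G hc j1.symm j3 j5 (G.ne_of_adj j2) (G.ne_of_adj j4) j7
  have hnae : ¬ G.Adj a e := by
    intro h
    rcases (hNa e).mp h with rfl | rfl | rfl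
    · exact heb rfl
    · exact G.ne_of_adj he rfl
    · exact j6 he
  have hnbe : ¬ G.Adj b e := by
    intro h
    rcases (hNb e).mp h with rfl | rfl | rfl
    · exact hea rfl
    · exact G.ne_of_adj he rfl
    · exact j6 he
  have hNv := nbr_eq G hc j2.symm j3.symm he (G.ne_of_adj j1) (Ne.symm hea) (Ne.symm heb)
  obtain ⟨b₀, c₀, d₀, m1, m2, m3, m4, m5, m6, m7⟩ := hap
  have hb0 := (hNv b₀).mp m1
  have hc0 := (hNv c₀).mp m2
  have hd0 := (hNv d₀).mp m3
  rcases hb0 with rfl | rfl | rfl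
  · have hc2 : c₀ = b ∨ c₀ = e := by
      rcases hc0 with h | h | h
      · exact absurd h (G.ne_of_adj m4).symm
      · exact Or.inl h
      · exact Or.inr h
    have hd2 : d₀ = b ∨ d₀ = e := by
      rcases hd0 with h | h | h
      · exact absurd h (G.ne_of_adj m5).symm
      · exact Or.inl h
      · exact Or.inr h
    rcases pair_cases m7 hc2 hd2 with ⟨rfl, rfl⟩ | ⟨rfl, rfl⟩
    · exact hnae m5
    · exact hnae m4
  · have hc2 : c₀ = a ∨ c₀ = e := by
      rcases hc0 with h | h | h
      · exact Or.inl h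
      · exact absurd h (G.ne_of_adj m4).symm
      · exact Or.inr h
    have hd2 : d₀ = a ∨ d₀ = e := by
      rcases hd0 with h | h | h
      · exact Or.inl h
      · exact absurd h (G.ne_of_adj m5).symm
      · exact Or.inr h
    rcases pair_cases m7 hc2 hd2 with ⟨rfl, rfl⟩ | ⟨rfl, rfl⟩
    · exact hnbe m5
    · exact hnbe m4
  · rcases hc0 with rfl | rfl | rfl
    · exact hnae m4.symm
    · exact hnbe m4.symm
    · exact G.ne_of_adj m4 rfl

/-- From a CRole witness configuration, the two ends of the shared edge are apexes. -/
lemma crole_apex (hc : IsCubic G) {v a b d : V} (j1 : G.Adj a b) (j2 : G.Adj a v)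
    (j3 : G.Adj b v) (j4 : G.Adj a d) (j5 : G.Adj b d) (j6 : ¬ G.Adj v d) (j7 : v ≠ d) :
    Apex G a ∧ Apex G b ∧ coapex G a = b ∧ coapex G b = a := by
  refine ⟨⟨b, v, d, j1, j2, j4, j3, j5, j6, j7⟩, ⟨a, v, d, j1.symm, j3, j5, j2, j4, j6, j7⟩,
    coapex_eq G hc j1 j2 j4 j3 j5 j6 j7, coapex_eq G hc j1.symm j3 j5 j2 j4 j6 j7⟩

lemma apex_not_blk (hc : IsCubic G) {a : V} (hap : Apex G a) {s : Finset V}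
    (hs : IsBlk G s) (ha : a ∈ s) : False := by
  obtain ⟨b₀, c₀, d₀, m1, m2, m3, m4, m5, m6, m7⟩ := hap
  obtain ⟨p, q, hpq, hap', haq, Hap, Haq, Hpq, hseq⟩ := blk_mem G hs ha
  have hNa := nbr_eq G hc m1 m2 m3 (G.ne_of_adj m4) (G.ne_of_adj m5) m7
  have hp := (hNa p).mp Hap
  have hq := (hNa q).mp Haq
  -- the member of the diamond not in {p,q} among {b₀,c₀,d₀} is adjacent to two of s
  have key : ∀ z, z ∉ s → G.Adj z a → G.Adj z p → False := by
    intro z hz hza hzp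
    exact hs.2 z hz ⟨a, ha, p, by rw [hseq]; simp, hap', hza, hzp⟩
  have key' : ∀ z, z ∉ s → G.Adj z a → G.Adj z q → False := by
    intro z hz hza hzq
    exact hs.2 z hz ⟨a, ha, q, by rw [hseq]; simp, haq, hza, hzq⟩
  have hmem : ∀ y : V, y ∈ s ↔ (y = a ∨ y = p ∨ y = q) := by
    intro y; rw [hseq]; simp
  rcases hp with rfl | rfl | rfl
  · -- p = b₀
    rcases hq with rfl | rfl | rfl
    · exact hpq rfl
    · -- q = c₀ : use d₀
      have hd0s : d₀ ∉ s := by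
        rw [hmem]
        push_neg
        exact ⟨(G.ne_of_adj m3).symm, (G.ne_of_adj m5).symm, Ne.symm m7⟩
      exact key d₀ hd0s m3.symm m5.symm
    · -- q = d₀ : use c₀
      have hc0s : c₀ ∉ s := by
        rw [hmem]
        push_neg
        exact ⟨(G.ne_of_adj m2).symm, (G.ne_of_adj m4).symm, m7⟩
      exact key c₀ hc0s m2.symm m4.symm
  · -- p = c₀
    rcases hq with rfl | rfl | rfl
    · -- q = b₀ : use d₀
      have hd0s : d₀ ∉ s := by
        rw [hmem]
        push_neg
        exact ⟨(G.ne_of_adj m3).symm, Ne.symm m7, (G.ne_of_adj m5).symm⟩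
      exact key' d₀ hd0s m3.symm m5.symm
    · exact hpq rfl
    · exact m6 Hpq
  · -- p = d₀
    rcases hq with rfl | rfl | rfl
    · -- q = b₀ : use c₀
      have hc0s : c₀ ∉ s := by
        rw [hmem]
        push_neg
        exact ⟨(G.ne_of_adj m2).symm, m7, (G.ne_of_adj m4).symm⟩
      exact key' c₀ hc0s m2.symm m4.symm
    · exact m6 Hpq.symm
    · exact hpq rfl

lemma crole_not_blk (hc : IsCubic G) {v : V} (hcr : CRole G v) {s : Finset V}
    (hs : IsBlk G s) (hv : v ∈ s) : False := by
  obtain ⟨a, b, d, j1, j2, j3, j4, j5, j6, j7⟩ := hcr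
  obtain ⟨e, he, hea, heb⟩ := third_nbr G hc j2.symm j3.symm (G.ne_of_adj j1)
  have hNa := nbr_eq G hc j1 j2 j4 (G.ne_of_adj j3) (G.ne_of_adj j5) j7
  have hNb := nbr_eq G hc j1.symm j3 j5 (G.ne_of_adj j2) (G.ne_of_adj j4) j7
  have hnae : ¬ G.Adj a e := by
    intro h
    rcases (hNa e).mp h with rfl | rfl | rfl
    · exact heb rfl
    · exact G.ne_of_adj he rfl
    · exact j6 he
  have hnbe : ¬ G.Adj b e := by
    intro h
    rcases (hNb e).mp h with rfl | rfl | rfl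
    · exact hea rfl
    · exact G.ne_of_adj he rfl
    · exact j6 he
  have hNv := nbr_eq G hc j2.symm j3.symm he (G.ne_of_adj j1) (Ne.symm hea) (Ne.symm heb)
  obtain ⟨p, q, hpq, hvp, hvq, Hvp, Hvq, Hpq, hseq⟩ := blk_mem G hs hv
  have hp := (hNv p).mp Hvp
  have hq := (hNv q).mp Hvq
  have hmem : ∀ y : V, y ∈ s ↔ (y = v ∨ y = p ∨ y = q) := by
    intro y; rw [hseq]; simp
  have hpq2 : (p = a ∧ q = b) ∨ (p = b ∧ q = a) := by
    rcases hp with rfl | rfl | rfl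
    · rcases hq with rfl | rfl | rfl
      · exact absurd rfl hpq
      · exact Or.inl ⟨rfl, rfl⟩
      · exact absurd Hpq hnae
    · rcases hq with rfl | rfl | rfl
      · exact Or.inr ⟨rfl, rfl⟩
      · exact absurd rfl hpq
      · exact absurd Hpq hnbe
    · rcases hq with rfl | rfl | rfl
      · exact absurd Hpq.symm hnae
      · exact absurd Hpq.symm hnbe
      · exact absurd rfl hpq
  have hds : d ∉ s := by
    rw [hmem]
    push_neg
    refine ⟨Ne.symm j7, ?_, ?_⟩ <;>
      rcases hpq2 with ⟨rfl, rfl⟩ | ⟨rfl, rfl⟩ <;>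
      first
        | exact (G.ne_of_adj j4).symm
        | exact (G.ne_of_adj j5).symm
  rcases hpq2 with ⟨rfl, rfl⟩ | ⟨rfl, rfl⟩
  · exact hs.2 d hds ⟨p, by rw [hmem]; tauto, q, by rw [hmem]; tauto, hpq, j4.symm, j5.symm⟩
  · exact hs.2 d hds ⟨p, by rw [hmem]; tauto, q, by rw [hmem]; tauto, hpq, j5.symm, j4.symm⟩

def K4F (v : V) : Finset V := insert v (G.neighborFinset v)

lemma k4_nbrF (hc : IsCubic G) {v b c d : V} (h : b ≠ c) (h2 : b ≠ d) (h3 : c ≠ d)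
    (a1 : G.Adj v b) (a2 : G.Adj v c) (a3 : G.Adj v d) :
    K4F G v = {v, b, c, d} := by
  rw [K4F, nbrF_eq G hc a1 a2 a3 h h2 h3]

lemma k4_mem (hc : IsCubic G) {v : V} (hk : InK4 G v) {u : V} (hu : u ∈ K4F G v) :
    InK4 G u ∧ K4F G u = K4F G v := by
  obtain ⟨b, c, d, h1, h2, h3, a1, a2, a3, a4, a5, a6⟩ := hk
  have hF := k4_nbrF G hc h1 h2 h3 a1 a2 a3
  rw [hF] at hu ⊢
  simp only [mem_insert, mem_singleton] at hu
  rcases hu with rfl | rfl | rfl | rfl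
  · exact ⟨⟨b, c, d, h1, h2, h3, a1, a2, a3, a4, a5, a6⟩, hF⟩
  · refine ⟨⟨v, c, d, G.ne_of_adj a2, G.ne_of_adj a3, h3, a1.symm, a4, a5, a2, a3, a6⟩, ?_⟩
    rw [k4_nbrF G hc (G.ne_of_adj a2) (G.ne_of_adj a3) h3 a1.symm a4 a5]
    ext y; simp; tauto
  · refine ⟨⟨v, b, d, G.ne_of_adj a1, G.ne_of_adj a3, h2, a2.symm, a4.symm, a6, a1, a3, a5⟩, ?_⟩
    rw [k4_nbrF G hc (G.ne_of_adj a1) (G.ne_of_adj a3) h2 a2.symm a4.symm a6]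
    ext y; simp; tauto
  · refine ⟨⟨v, b, c, G.ne_of_adj a1, G.ne_of_adj a2, h1, a3.symm, a5.symm, a6.symm, a1, a2, a4⟩, ?_⟩
    rw [k4_nbrF G hc (G.ne_of_adj a1) (G.ne_of_adj a2) h1 a3.symm a5.symm a6.symm]
    ext y; simp; tauto

lemma k4_self_mem {v : V} : v ∈ K4F G v := by simp [K4F]

lemma k4_adj_mem (hc : IsCubic G) {v : V} (hk : InK4 G v) {u w : V} (hu : u ∈ K4F G v)
    (hw : G.Adj u w) : w ∈ K4F G v := by
  obtain ⟨hku, hFu⟩ := k4_mem G hc hk hu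
  rw [← hFu, K4F]
  simp [mem_neighborFinset, hw]

lemma k4_ball (hc : IsCubic G) {v : V} (hk : InK4 G v) {x : V}
    (h : G.edist v x ≤ 2) : x ∈ K4F G v := by
  rcases (edist_le_two_iff G).mp h with rfl | h | ⟨w, h1, h2⟩
  · exact k4_self_mem G
  · exact k4_adj_mem G hc hk (k4_self_mem G) h
  · exact k4_adj_mem G hc hk (k4_adj_mem G hc hk (k4_self_mem G) h1) h2

lemma k4_not_apex (hc : IsCubic G) {a : V} (hk : InK4 G a) (hap : Apex G a) : False := by
  obtain ⟨b, c, d, h1, h2, h3, a1, a2, a3, a4, a5, a6⟩ := hk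
  obtain ⟨b₀, c₀, d₀, m1, m2, m3, m4, m5, m6, m7⟩ := hap
  have hNa := nbr_eq G hc a1 a2 a3 h1 h2 h3
  have hadj : ∀ x y : V, G.Adj a x → G.Adj a y → x ≠ y → G.Adj x y := by
    intro x y hx hy hxy
    rcases (hNa x).mp hx with rfl | rfl | rfl <;> rcases (hNa y).mp hy with rfl | rfl | rfl <;>
      first
        | exact absurd rfl hxy
        | assumption
        | exact a4.symm
        | exact a5.symm
        | exact a6.symm
  exact m6 (hadj c₀ d₀ m2 m3 m7)

lemma k4_not_blk (hc : IsCubic G) {x : V} (hk : InK4 G x) {s : Finset V}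
    (hs : IsBlk G s) (hx : x ∈ s) : False := by
  obtain ⟨hadjx, hext⟩ := extv_spec G hc hs hx
  obtain ⟨p, q, hpq, hxp, hxq, Hxp, Hxq, Hpq, hseq⟩ := blk_mem G hs hx
  obtain ⟨b, c, d, h1, h2, h3, a1, a2, a3, a4, a5, a6⟩ := hk
  have hNa := nbr_eq G hc a1 a2 a3 h1 h2 h3
  have hadj : ∀ y z : V, G.Adj x y → G.Adj x z → y ≠ z → G.Adj y z := by
    intro y z hy hz hyz
    rcases (hNa y).mp hy with rfl | rfl | rfl <;> rcases (hNa z).mp hz with rfl | rfl | rfl <;>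
      first
        | exact absurd rfl hyz
        | assumption
        | exact a4.symm
        | exact a5.symm
        | exact a6.symm
  have hep : G.Adj (extv G x) p := hadj _ _ hadjx Hxp (fun h => hext (h ▸ (by rw [hseq]; simp)))
  have heq : G.Adj (extv G x) q := hadj _ _ hadjx Hxq (fun h => hext (h ▸ (by rw [hseq]; simp)))
  exact hs.2 (extv G x) hext ⟨p, by rw [hseq]; simp, q, by rw [hseq]; simp, hpq, hep, heq⟩


/-- The graph on triangle blocks: two blocks are adjacent if joined by an edge of `G`. -/
def Qg : SimpleGraph {s : Finset V // IsBlk G s} where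
  Adj s t := s ≠ t ∧ ∃ x ∈ s.1, ∃ y ∈ t.1, G.Adj x y
  symm := by
    constructor
    rintro s t ⟨hne, x, hx, y, hy, hxy⟩
    exact ⟨hne.symm, y, hy, x, hx, hxy.symm⟩
  loopless := by constructor; rintro s ⟨hne, _⟩; exact hne rfl

noncomputable def rootOf (s : {s : Finset V // IsBlk G s}) : {s : Finset V // IsBlk G s} :=
  ((Qg G).connectedComponentMk s).out

lemma reach_root (s : {s : Finset V // IsBlk G s}) : (Qg G).Reachable s (rootOf G s) :=
  ((SimpleGraph.ConnectedComponent.eq).mp (Quot.out_eq _)).symm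

lemma root_congr {s t : {s : Finset V // IsBlk G s}} (h : (Qg G).Reachable s t) :
    rootOf G s = rootOf G t := by
  unfold rootOf
  rw [SimpleGraph.ConnectedComponent.sound h]

noncomputable def depth (s : {s : Finset V // IsBlk G s}) : ℕ :=
  ((Qg G).edist s (rootOf G s)).toNat

lemma depth_edist (s : {s : Finset V // IsBlk G s}) :
    (Qg G).edist s (rootOf G s) = (depth G s : ℕ∞) := by
  rw [depth, ENat.coe_toNat]
  exact edist_ne_top_iff_reachable.mpr (reach_root G s)

lemma depth_zero_iff (s : {s : Finset V // IsBlk G s}) :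
    depth G s = 0 ↔ s = rootOf G s := by
  constructor
  · intro h
    have := depth_edist G s
    rw [h] at this
    exact edist_eq_zero_iff.mp (by exact_mod_cast this)
  · intro h
    rw [depth, ← h]
    simp [SimpleGraph.edist_self]

lemma depth_step {s : {s : Finset V // IsBlk G s}} (h : s ≠ rootOf G s) :
    ∃ t, (Qg G).Adj s t ∧ depth G t + 1 = depth G s := by
  have hne : (Qg G).edist s (rootOf G s) ≠ ⊤ :=
    edist_ne_top_iff_reachable.mpr (reach_root G s)
  obtain ⟨p, hp⟩ := exists_walk_of_edist_ne_top hne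
  obtain ⟨t, hadj, q, rfl⟩ := SimpleGraph.Walk.exists_eq_cons_of_ne h p
  · refine ⟨t, hadj, ?_⟩
    have hroot : rootOf G t = rootOf G s := root_congr G hadj.reachable |>.symm
    have hlen : (q.length : ℕ∞) + 1 = depth G s := by
      rw [← depth_edist, ← hp]
      simp [SimpleGraph.Walk.length_cons]
    -- edist t root ≤ q.length
    have h1 : (Qg G).edist t (rootOf G t) ≤ q.length := by
      rw [hroot]
      exact SimpleGraph.edist_le q
    -- depth s ≤ depth t + 1
    have h2 : (depth G s : ℕ∞) ≤ (Qg G).edist t (rootOf G t) + 1 := by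
      rw [← depth_edist, hroot]
      calc (Qg G).edist s (rootOf G s) ≤ (Qg G).edist s t + (Qg G).edist t (rootOf G s) :=
            SimpleGraph.edist_triangle
        _ ≤ 1 + (Qg G).edist t (rootOf G s) := by
            gcongr
            exact le_of_eq (edist_eq_one_iff_adj.mpr hadj)
        _ = (Qg G).edist t (rootOf G s) + 1 := by ring
    rw [depth_edist] at h1 h2
    have hq1 : depth G t ≤ q.length := by exact_mod_cast h1
    have hq2 : (depth G s : ℕ) ≤ depth G t + 1 := by exact_mod_cast h2
    have hq3 : q.length + 1 = depth G s := by exact_mod_cast hlen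
    omega

def NonSing (s : {s : Finset V // IsBlk G s}) : Prop := ∃ t, (Qg G).Adj s t

lemma target_exists {s : {s : Finset V // IsBlk G s}} (h : NonSing G s) :
    ∃ t, (Qg G).Adj s t ∧ (Even (depth G t) ↔ ¬ Even (depth G s)) := by
  by_cases hroot : s = rootOf G s
  · obtain ⟨t, ht⟩ := h
    refine ⟨t, ht, ?_⟩
    have h0 : depth G s = 0 := (depth_zero_iff G s).mpr hroot
    have htne : t ≠ rootOf G t := by
      intro hteq
      have : rootOf G t = rootOf G s := root_congr G ht.reachable |>.symm
      rw [this, ← hroot] at hteq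
      exact (Qg G).ne_of_adj ht hteq.symm
    have ht0 : depth G t ≠ 0 := fun h' => htne ((depth_zero_iff G t).mp h')
    -- depth t ≤ 1
    have hle : depth G t ≤ depth G s + 1 := by
      have hroot2 : rootOf G t = rootOf G s := root_congr G ht.reachable |>.symm
      have hts : (Qg G).edist t s = 1 := edist_eq_one_iff_adj.mpr ht.symm
      have hcalc : (depth G t : ℕ∞) ≤ 1 + depth G s := by
        rw [← depth_edist, ← depth_edist, hroot2]
        calc (Qg G).edist t (rootOf G s) ≤ (Qg G).edist t s + (Qg G).edist s (rootOf G s) :=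
              SimpleGraph.edist_triangle
          _ = 1 + (Qg G).edist s (rootOf G s) := by rw [hts]
      have hfin : (depth G t : ℕ) ≤ 1 + depth G s := by exact_mod_cast hcalc
      omega
    have : depth G t = 1 := by omega
    rw [this, h0]
    simp
  · obtain ⟨t, hadj, hdep⟩ := depth_step G hroot
    refine ⟨t, hadj, ?_⟩
    rw [← hdep]
    simp [Nat.even_add_one]

open scoped Classical in
noncomputable def target (s : {s : Finset V // IsBlk G s}) : {s : Finset V // IsBlk G s} :=
  if h : ∃ t, (Qg G).Adj s t ∧ (Even (depth G t) ↔ ¬ Even (depth G s)) then h.choose else s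

open scoped Classical in
noncomputable def tRep (s : {s : Finset V // IsBlk G s}) : V :=
  if h : ∃ x ∈ s.1, ∃ y ∈ (target G s).1, G.Adj x y then h.choose
  else Classical.choice (by
    obtain ⟨a, _, _, _, _, _, _, _, _, _⟩ := s.2.1
    exact ⟨a⟩)

lemma blk_disjoint (hcu : IsCubic G) {s t : Finset V} (hs : IsBlk G s) (ht : IsBlk G t)
    (hne : s ≠ t) {x : V} (hx : x ∈ s) : x ∉ t :=
  fun hxt => hne (blk_unique G hcu hs ht hx hxt)

lemma tRep_spec (hcu : IsCubic G) {s : {s : Finset V // IsBlk G s}} (h : NonSing G s) :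
    tRep G s ∈ s.1 ∧ extv G (tRep G s) ∈ (target G s).1 ∧
    (Even (depth G (target G s)) ↔ ¬ Even (depth G s)) ∧ target G s ≠ s := by
  classical
  have hex := target_exists G h
  have htg : (Qg G).Adj s (target G s) ∧ (Even (depth G (target G s)) ↔ ¬ Even (depth G s)) := by
    rw [target, dif_pos hex]
    exact hex.choose_spec
  obtain ⟨⟨hne, hx⟩, hpar⟩ := htg
  have hx' : ∃ x ∈ s.1, ∃ y ∈ (target G s).1, G.Adj x y := hx
  have hrep : tRep G s ∈ s.1 ∧ ∃ y ∈ (target G s).1, G.Adj (tRep G s) y := by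
    rw [tRep, dif_pos hx']
    exact hx'.choose_spec
  obtain ⟨hrs, y, hy, hxy⟩ := hrep
  have hyns : y ∉ s.1 := by
    apply blk_disjoint G hcu (target G s).2 s.2 _ hy
    intro hval
    exact hne.symm (Subtype.ext hval)
  have : y = extv G (tRep G s) := extv_uniq G hcu s.2 hrs hxy hyns
  exact ⟨hrs, this ▸ hy, hpar, fun h' => hne h'.symm⟩


/-- Core conflict lemma: two vertices in distinct blocks at distance ≤ 2. -/
lemma blk_conflict (hcu : IsCubic G) {s t : Finset V} (hs : IsBlk G s) (ht : IsBlk G t)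
    (hne : s ≠ t) {x y : V} (hx : x ∈ s) (hy : y ∈ t) (hd : G.edist x y ≤ 2) :
    extv G x ∈ t ∨ extv G y ∈ s ∨ extv G x = extv G y := by
  rcases (edist_le_two_iff G).mp hd with rfl | h | ⟨w, h1, h2⟩
  · exact absurd hy (blk_disjoint G hcu hs ht hne hx)
  · rcases (blk_nbr G hcu hs hx y).mp h with ⟨hys, _⟩ | hyx
    · exact absurd hys (fun h' => blk_disjoint G hcu hs ht hne h' hy)
    · exact Or.inl (hyx ▸ hy)
  · rcases (blk_nbr G hcu hs hx w).mp h1 with ⟨hws, _⟩ | hwx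
    · rcases (blk_nbr G hcu ht hy w).mp h2.symm with ⟨hwt, _⟩ | hwy
      · exact absurd hwt (blk_disjoint G hcu hs ht hne hws)
      · exact Or.inr (Or.inl (hwy ▸ hws))
    · rcases (blk_nbr G hcu ht hy (extv G x)).mp (hwx ▸ h2).symm with ⟨het, _⟩ | hee
      · exact Or.inl het
      · exact Or.inr (Or.inr hee)

lemma blk_card {s : Finset V} (hs : IsBlk G s) : s.card = 3 := by
  obtain ⟨a, b, c, hab, hac, hbc, _, _, _, rfl⟩ := hs.1
  rw [card_insert_of_notMem (by simp [hab, hac]), card_insert_of_notMem (by simp [hbc]),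
    card_singleton]

/-- A singleton block (no `Qg`-neighbour) has all external neighbours outside all blocks. -/
lemma sing_ext_not_blk (hcu : IsCubic G) {s : {s : Finset V // IsBlk G s}}
    (hsing : ¬ NonSing G s) {x : V} (hx : x ∈ s.1) {t : Finset V} (ht : IsBlk G t) :
    extv G x ∉ t := by
  intro hmem
  have hne : s.1 ≠ t := by
    intro h
    exact (extv_spec G hcu s.2 hx).2 (h ▸ hmem)
  exact hsing ⟨⟨t, ht⟩, fun h => hne (congrArg Subtype.val h), x, hx, extv G x, hmem,
    (extv_spec G hcu s.2 hx).1⟩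

def HasD (s : {s : Finset V // IsBlk G s}) : Prop := ∃ x ∈ s.1, CRole G (extv G x)

open scoped Classical in
noncomputable def dRep (s : {s : Finset V // IsBlk G s}) : V :=
  if h : HasD G s then h.choose
  else Classical.choice (by
    obtain ⟨a, _, _, _, _, _, _, _, _, _⟩ := s.2.1
    exact ⟨a⟩)

lemma dRep_spec {s : {s : Finset V // IsBlk G s}} (h : HasD G s) :
    dRep G s ∈ s.1 ∧ CRole G (extv G (dRep G s)) := by
  classical
  rw [dRep, dif_pos h]
  exact h.choose_spec

noncomputable def wSet (s : {s : Finset V // IsBlk G s}) : Finset V := s.1.image (extv G)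

lemma wSet_card (hcu : IsCubic G) (s : {s : Finset V // IsBlk G s}) :
    (wSet G s).card = 3 := by
  rw [wSet, Finset.card_image_of_injOn, blk_card G s.2]
  intro x hx y hy hxy
  by_contra hne
  exact blk_ext_inj G hcu s.2 hx hy hne hxy

/-- Blocks which are singletons in `Qg` and have no diamond port. -/
def PS (s : {s : Finset V // IsBlk G s}) : Prop := ¬ NonSing G s ∧ ¬ HasD G s

open scoped Classical in
noncomputable def portOf (s : {s : Finset V // IsBlk G s}) (w : V) : V :=
  if h : ∃ x ∈ s.1, extv G x = w then h.choose
  else Classical.choice (by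
    obtain ⟨a, _, _, _, _, _, _, _, _, _⟩ := s.2.1
    exact ⟨a⟩)

lemma portOf_spec {s : {s : Finset V // IsBlk G s}} {w : V} (h : ∃ x ∈ s.1, extv G x = w) :
    portOf G s w ∈ s.1 ∧ extv G (portOf G s w) = w := by
  classical
  rw [portOf, dif_pos h]
  exact h.choose_spec

lemma hall_cond (hcu : IsCubic G) (S : Finset {p : {s : Finset V // IsBlk G s} // PS G p}) :
    S.card ≤ (S.biUnion fun p => wSet G p.1).card := by
  classical
  set W := S.biUnion (fun p => wSet G p.1) with hW
  set A := (S ×ˢ W).filter (fun z => z.2 ∈ wSet G z.1.1) with hA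
  have hfst : ∀ z ∈ A, z.1 ∈ S := by
    intro z hz
    rw [hA, Finset.mem_filter, Finset.mem_product] at hz
    exact hz.1.1
  have hsnd : ∀ z ∈ A, z.2 ∈ W := by
    intro z hz
    rw [hA, Finset.mem_filter, Finset.mem_product] at hz
    exact hz.1.2
  have hcard1 : A.card = ∑ p ∈ S, (A.filter fun z => z.1 = p).card :=
    Finset.card_eq_sum_card_fiberwise hfst
  have hfib1 : ∀ p ∈ S, (A.filter fun z => z.1 = p).card = 3 := by
    intro p hp
    rw [← wSet_card G hcu p.1]
    apply Finset.card_bij (fun z _ => z.2)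
    · intro z hz
      rw [Finset.mem_filter] at hz
      obtain ⟨hzA, hz1⟩ := hz
      rw [hA, Finset.mem_filter] at hzA
      rw [← hz1]
      exact hzA.2
    · intro z hz z' hz' heq
      rw [Finset.mem_filter] at hz hz'
      exact Prod.ext (hz.2.trans hz'.2.symm) heq
    · intro w hw
      refine ⟨(p, w), ?_, rfl⟩
      rw [Finset.mem_filter, hA, Finset.mem_filter, Finset.mem_product]
      refine ⟨⟨⟨hp, ?_⟩, hw⟩, rfl⟩
      rw [hW]
      exact Finset.mem_biUnion.mpr ⟨p, hp, hw⟩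
  have hcard2 : A.card = ∑ w ∈ W, (A.filter fun z => z.2 = w).card :=
    Finset.card_eq_sum_card_fiberwise hsnd
  have hfib2 : ∀ w ∈ W, (A.filter fun z => z.2 = w).card ≤ 3 := by
    intro w hw
    have : (A.filter fun z => z.2 = w).card ≤ (G.neighborFinset w).card := by
      apply Finset.card_le_card_of_injOn (fun z => portOf G z.1.1 w)
      · intro z hz
        rw [Finset.mem_coe, Finset.mem_filter] at hz
        obtain ⟨hzA, hz2⟩ := hz
        rw [hA, Finset.mem_filter] at hzA
        have hmem : z.2 ∈ wSet G z.1.1 := hzA.2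
        rw [hz2] at hmem
        rw [wSet, Finset.mem_image] at hmem
        obtain ⟨x, hx, hxw⟩ := hmem
        obtain ⟨hps, hpw⟩ := portOf_spec G ⟨x, hx, hxw⟩
        rw [Finset.mem_coe, mem_neighborFinset]
        have := (extv_spec G hcu z.1.1.2 hps).1
        rw [hpw] at this
        exact this.symm
      · intro z hz z' hz' heq
        rw [Finset.mem_coe, Finset.mem_filter] at hz hz'
        obtain ⟨hzA, hz2⟩ := hz
        obtain ⟨hzA', hz2'⟩ := hz'
        rw [hA, Finset.mem_filter] at hzA hzA'
        have hm : z.2 ∈ wSet G z.1.1 := hzA.2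
        have hm' : z'.2 ∈ wSet G z'.1.1 := hzA'.2
        rw [hz2] at hm; rw [hz2'] at hm'
        rw [wSet, Finset.mem_image] at hm hm'
        obtain ⟨x, hx, hxw⟩ := hm
        obtain ⟨x', hx', hxw'⟩ := hm'
        obtain ⟨hps, _⟩ := portOf_spec G ⟨x, hx, hxw⟩
        obtain ⟨hps', _⟩ := portOf_spec G ⟨x', hx', hxw'⟩
        have heq' : portOf G z.1.1 w = portOf G z'.1.1 w := heq
        rw [heq'] at hps
        have hblkeq : z.1.1.1 = z'.1.1.1 := blk_unique G hcu z.1.1.2 z'.1.1.2 hps hps'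
        have : z.1 = z'.1 := Subtype.ext (Subtype.ext hblkeq)
        exact Prod.ext this (hz2.trans hz2'.symm)
    have h3 : (G.neighborFinset w).card = 3 := by rw [← hcu w]; rfl
    omega
  have hsum1 : A.card = 3 * S.card := by
    rw [hcard1, Finset.sum_congr rfl hfib1]
    simp [mul_comm]
  have hsum2 : A.card ≤ 3 * W.card := by
    rw [hcard2]
    calc ∑ w ∈ W, (A.filter fun z => z.2 = w).card ≤ ∑ w ∈ W, 3 :=
          Finset.sum_le_sum hfib2
      _ = 3 * W.card := by simp [mul_comm]
  omega


lemma target_adj {s : {s : Finset V // IsBlk G s}} (h : NonSing G s) :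
    (Qg G).Adj s (target G s) := by
  classical
  have hex := target_exists G h
  rw [target, dif_pos hex]
  exact hex.choose_spec.1

lemma apex_ball (hcu : IsCubic G) {a b c d : V}
    (m1 : G.Adj a b) (m2 : G.Adj a c) (m3 : G.Adj a d) (m4 : G.Adj b c) (m5 : G.Adj b d)
    (m6 : ¬ G.Adj c d) (m7 : c ≠ d) {x : V} (h : G.edist a x ≤ 2) :
    x = a ∨ x = b ∨ x = c ∨ x = d ∨ G.Adj c x ∨ G.Adj d x := by
  have hNa := nbr_eq G hcu m1 m2 m3 (G.ne_of_adj m4) (G.ne_of_adj m5) m7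
  have hNb := nbr_eq G hcu m1.symm m4 m5 (G.ne_of_adj m2) (G.ne_of_adj m3) m7
  rcases (edist_le_two_iff G).mp h with rfl | hadj | ⟨w, h1, h2⟩
  · exact Or.inl rfl
  · rcases (hNa x).mp hadj with rfl | rfl | rfl
    · exact Or.inr (Or.inl rfl)
    · exact Or.inr (Or.inr (Or.inl rfl))
    · exact Or.inr (Or.inr (Or.inr (Or.inl rfl)))
  · rcases (hNa w).mp h1 with rfl | rfl | rfl
    · rcases (hNb x).mp h2 with rfl | rfl | rfl
      · exact Or.inl rfl
      · exact Or.inr (Or.inr (Or.inl rfl))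
      · exact Or.inr (Or.inr (Or.inr (Or.inl rfl)))
    · exact Or.inr (Or.inr (Or.inr (Or.inr (Or.inl h2))))
    · exact Or.inr (Or.inr (Or.inr (Or.inr (Or.inr h2))))

/-- If `v` is a CRole vertex with shared edge `a,b` and `x` is an apex adjacent to `v`,
then `x` is `a` or `b`. -/
lemma crole_adj_apex (hcu : IsCubic G) {v a b d : V} (j1 : G.Adj a b) (j2 : G.Adj a v)
    (j3 : G.Adj b v) (j4 : G.Adj a d) (j5 : G.Adj b d) (j6 : ¬ G.Adj v d) (j7 : v ≠ d)
    {x : V} (hx : Apex G x) (hadj : G.Adj v x) : x = a ∨ x = b := by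
  obtain ⟨e, he, hea, heb⟩ := third_nbr G hcu j2.symm j3.symm (G.ne_of_adj j1)
  have hNa := nbr_eq G hcu j1 j2 j4 (G.ne_of_adj j3) (G.ne_of_adj j5) j7
  have hNb := nbr_eq G hcu j1.symm j3 j5 (G.ne_of_adj j2) (G.ne_of_adj j4) j7
  have hnae : ¬ G.Adj a e := by
    intro h
    rcases (hNa e).mp h with rfl | rfl | rfl
    · exact heb rfl
    · exact G.ne_of_adj he rfl
    · exact j6 he
  have hnbe : ¬ G.Adj b e := by
    intro h
    rcases (hNb e).mp h with rfl | rfl | rfl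
    · exact hea rfl
    · exact G.ne_of_adj he rfl
    · exact j6 he
  have hNv := nbr_eq G hcu j2.symm j3.symm he (G.ne_of_adj j1) (Ne.symm hea) (Ne.symm heb)
  rcases (hNv x).mp hadj with rfl | rfl | rfl
  · exact Or.inl rfl
  · exact Or.inr rfl
  · -- x = e is an apex : derive a contradiction
    exfalso
    obtain ⟨b₀, c₀, d₀, m1, m2, m3, m4, m5, m6, m7⟩ := hx
    have hNe := nbr_eq G hcu m1 m2 m3 (G.ne_of_adj m4) (G.ne_of_adj m5) m7
    have hv : v = b₀ ∨ v = c₀ ∨ v = d₀ := (hNe v).mp hadj.symm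
    rcases hv with rfl | rfl | rfl
    · -- v adjacent to c₀ and d₀, both in {a,b}
      have hc2 : c₀ = a ∨ c₀ = b := by
        rcases (hNv c₀).mp m4 with h | h | h
        · exact Or.inl h
        · exact Or.inr h
        · exact absurd h (G.ne_of_adj m2).symm
      have hd2 : d₀ = a ∨ d₀ = b := by
        rcases (hNv d₀).mp m5 with h | h | h
        · exact Or.inl h
        · exact Or.inr h
        · exact absurd h (G.ne_of_adj m3).symm
      rcases pair_cases m7 hc2 hd2 with ⟨rfl, rfl⟩ | ⟨rfl, rfl⟩
      · exact m6 j1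
      · exact m6 j1.symm
    · -- v = c₀ : b₀ is adjacent to v and to x(=e)
      have hb2 : b₀ = a ∨ b₀ = b := by
        rcases (hNv b₀).mp m4.symm with h | h | h
        · exact Or.inl h
        · exact Or.inr h
        · exact absurd h (G.ne_of_adj m1).symm
      rcases hb2 with rfl | rfl
      · exact hnae m1.symm
      · exact hnbe m1.symm
    · -- v = d₀
      have hb2 : b₀ = a ∨ b₀ = b := by
        rcases (hNv b₀).mp m5.symm with h | h | h
        · exact Or.inl h
        · exact Or.inr h
        · exact absurd h (G.ne_of_adj m1).symm
      rcases hb2 with rfl | rfl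
      · exact hnae m1.symm
      · exact hnbe m1.symm

/-- An apex is never within distance 2 of a block vertex whose external neighbour
is not a CRole vertex. -/
lemma apex_noncrole_sep (hcu : IsCubic G) {a : V} (hap : Apex G a) {s : Finset V}
    (hs : IsBlk G s) {x : V} (hx : x ∈ s) (hnc : ¬ CRole G (extv G x))
    (h : G.edist a x ≤ 2) : False := by
  obtain ⟨b, c, d, m1, m2, m3, m4, m5, m6, m7⟩ := hap
  have hapa : Apex G a := ⟨b, c, d, m1, m2, m3, m4, m5, m6, m7⟩
  have hcrc : CRole G c := ⟨a, b, d, m1, m2, m4, m3, m5, m6, m7⟩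
  have hcrd : CRole G d := ⟨a, b, c, m1, m3, m5, m2, m4, fun h' => m6 h'.symm, Ne.symm m7⟩
  have hapb : Apex G b := ⟨a, c, d, m1.symm, m4, m5, m2, m3, m6, m7⟩
  rcases apex_ball G hcu m1 m2 m3 m4 m5 m6 m7 h with rfl | rfl | rfl | rfl | hadj | hadj
  · exact apex_not_blk G hcu hapa hs hx
  · exact apex_not_blk G hcu hapb hs hx
  · exact crole_not_blk G hcu hcrc hs hx
  · exact crole_not_blk G hcu hcrd hs hx
  · rcases (blk_nbr G hcu hs hx c).mp hadj.symm with ⟨hcs, _⟩ | hce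
    · exact crole_not_blk G hcu hcrc hs hcs
    · exact hnc (hce ▸ hcrc)
  · rcases (blk_nbr G hcu hs hx d).mp hadj.symm with ⟨hds, _⟩ | hde
    · exact crole_not_blk G hcu hcrd hs hds
    · exact hnc (hde ▸ hcrd)

/-- Two block vertices adjacent to the same CRole vertex are equal. -/
lemma crole_two_ports (hcu : IsCubic G) {γ : V} (hcr : CRole G γ) {x y : V}
    (hxadj : G.Adj x γ) (hyadj : G.Adj y γ) {s t : Finset V} (hs : IsBlk G s)
    (ht : IsBlk G t) (hx : x ∈ s) (hy : y ∈ t) : x = y := by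
  obtain ⟨a, b, d, j1, j2, j3, j4, j5, j6, j7⟩ := hcr
  obtain ⟨e, he, hea, heb⟩ := third_nbr G hcu j2.symm j3.symm (G.ne_of_adj j1)
  have hNv := nbr_eq G hcu j2.symm j3.symm he (G.ne_of_adj j1) (Ne.symm hea) (Ne.symm heb)
  obtain ⟨hapa, hapb, _, _⟩ := crole_apex G hcu j1 j2 j3 j4 j5 j6 j7
  have hx' : x = a ∨ x = b ∨ x = e := (hNv x).mp hxadj.symm
  have hy' : y = a ∨ y = b ∨ y = e := (hNv y).mp hyadj.symm
  rcases hx' with rfl | rfl | rfl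
  · exact absurd (apex_not_blk G hcu hapa hs hx) id
  · exact absurd (apex_not_blk G hcu hapb hs hx) id
  · rcases hy' with rfl | rfl | rfl
    · exact absurd (apex_not_blk G hcu hapa ht hy) id
    · exact absurd (apex_not_blk G hcu hapb ht hy) id
    · rfl

lemma k4_card (hcu : IsCubic G) {v : V} (hk : InK4 G v) : (K4F G v).card = 4 := by
  obtain ⟨b, c, d, h1, h2, h3, a1, a2, a3, a4, a5, a6⟩ := hk
  rw [k4_nbrF G hcu h1 h2 h3 a1 a2 a3]
  rw [card_insert_of_notMem (by simp [G.ne_of_adj a1, G.ne_of_adj a2, G.ne_of_adj a3]),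
    card_insert_of_notMem (by simp [h1, h2]), card_insert_of_notMem (by simp [h3]),
    card_singleton]


section KChoice
variable [LinearOrder V]

lemma min'_congr {s t : Finset V} (h : s = t) (hs : s.Nonempty) :
    s.min' hs = t.min' (h ▸ hs) := by subst h; rfl

noncomputable def kmin (v : V) : V := (K4F G v).min' ⟨v, k4_self_mem G⟩

noncomputable def ksnd (v : V) : V :=
  if h : ((K4F G v).erase (kmin G v)).Nonempty then ((K4F G v).erase (kmin G v)).min' h else v

lemma kmin_eq {u v : V} (h : K4F G u = K4F G v) : kmin G u = kmin G v := by
  unfold kmin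
  exact min'_congr h _

lemma erase_nonempty (hcu : IsCubic G) (v : V) :
    ((K4F G v).erase (kmin G v)).Nonempty := by
  apply Finset.card_pos.mp
  have h1 : (G.neighborFinset v).card = 3 := by rw [← hcu v]; rfl
  have h2 : (G.neighborFinset v).card ≤ (K4F G v).card :=
    Finset.card_le_card (Finset.subset_insert _ _)
  have h3 := Finset.card_erase_of_mem (Finset.min'_mem (K4F G v) ⟨v, k4_self_mem G⟩)
  rw [kmin]
  omega

lemma ksnd_eq (hcu : IsCubic G) {u v : V} (h : K4F G u = K4F G v) :
    ksnd G u = ksnd G v := by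
  rw [ksnd, ksnd, dif_pos (erase_nonempty G hcu u), dif_pos (erase_nonempty G hcu v)]
  rw [min'_congr (by rw [h, kmin_eq G h])]

lemma ksnd_props (hcu : IsCubic G) (v : V) :
    ksnd G v ∈ K4F G v ∧ ksnd G v ≠ kmin G v := by
  rw [ksnd, dif_pos (erase_nonempty G hcu v)]
  have := Finset.min'_mem ((K4F G v).erase (kmin G v)) (erase_nonempty G hcu v)
  rw [Finset.mem_erase] at this
  exact ⟨this.2, this.1⟩

end KChoice

end CubicPack


open CubicPack in
theorem stmt_1 {V : Type*} [Fintype V] (G : SimpleGraph V) [DecidableRel G.Adj]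
    (hcubic : IsCubic G) :
    ∃ X Y : Set V, Disjoint X Y ∧ TwoPacking G X ∧ TwoPacking G Y ∧
      ∀ a b c : V, a ∉ X ∪ Y → b ∉ X ∪ Y → c ∉ X ∪ Y → ¬ IsTriangle G a b c := by
  classical
  letI : LinearOrder V := LinearOrder.lift' (fun v => ((Fintype.equivFin V) v : ℕ))
    (fun a b h => (Fintype.equivFin V).injective (Fin.val_injective h))
  obtain ⟨f, hfinj, hfw⟩ := (Finset.all_card_le_biUnion_card_iff_exists_injective
    (fun p : {q : {s : Finset V // IsBlk G s} // PS G q} => wSet G p.1)).mp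
    (fun S => hall_cond G hcubic S)
  have hpspec : ∀ p : {q : {s : Finset V // IsBlk G s} // PS G q},
      portOf G p.1 (f p) ∈ p.1.1 ∧ extv G (portOf G p.1 (f p)) = f p := by
    intro p
    have h := hfw p
    rw [wSet, Finset.mem_image] at h
    obtain ⟨x, hx, hxe⟩ := h
    exact portOf_spec G ⟨x, hx, hxe⟩
  set XS : Set V := {v | (InK4 G v ∧ v = kmin G v) ∨ (Apex G v ∧ v < coapex G v) ∨
    (∃ s : {s : Finset V // IsBlk G s}, NonSing G s ∧ Even (depth G s) ∧ v = tRep G s)}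
    with hXS
  set YS : Set V := {v | (InK4 G v ∧ v = ksnd G v) ∨
    (∃ s : {s : Finset V // IsBlk G s}, NonSing G s ∧ ¬ Even (depth G s) ∧ v = tRep G s) ∨
    (∃ s : {s : Finset V // IsBlk G s}, ¬ NonSing G s ∧ HasD G s ∧ v = dRep G s) ∨
    (∃ p : {q : {s : Finset V // IsBlk G s} // PS G q}, v = portOf G p.1 (f p))} with hYS
  -- general helpers
  have hK4gen : ∀ {u v : V}, InK4 G u → G.edist u v ≤ 2 → (InK4 G v ∧ K4F G v = K4F G u) :=
    fun hk hle => k4_mem G hcubic hk (k4_ball G hcubic hk hle)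
  have hTnc : ∀ {t : {s : Finset V // IsBlk G s}} (hnt : NonSing G t),
      ¬ CRole G (extv G (tRep G t)) :=
    fun hnt hcr => crole_not_blk G hcubic hcr (target G _).2 (tRep_spec G hcubic hnt).2.1
  -- apex vs apex (both with the `<` choice)
  have hAA : ∀ {u v : V}, Apex G u → u < coapex G u → Apex G v → v < coapex G v →
      u ≠ v → G.edist u v ≤ 2 → False := by
    intro u v hap hlt hap2 hlt2 huv hle
    obtain ⟨b, c, d, m1, m2, m3, m4, m5, m6, m7⟩ := hap
    have hcoap : coapex G u = b := coapex_eq G hcubic m1 m2 m3 m4 m5 m6 m7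
    have hcob : coapex G b = u := (crole_apex G hcubic m1 m2 m4 m3 m5 m6 m7).2.2.2
    have hvb : v ≠ b := by
      intro hveq
      subst hveq
      rw [hcob] at hlt2
      rw [hcoap] at hlt
      exact absurd (hlt.trans hlt2) (lt_irrefl u)
    have hcrc : CRole G c := ⟨u, b, d, m1, m2, m4, m3, m5, m6, m7⟩
    have hcrd : CRole G d := ⟨u, b, c, m1, m3, m5, m2, m4, fun h' => m6 h'.symm, Ne.symm m7⟩
    rcases apex_ball G hcubic m1 m2 m3 m4 m5 m6 m7 hle with rfl | rfl | rfl | rfl | hadj | hadj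
    · exact huv rfl
    · exact hvb rfl
    · exact apex_not_crole G hcubic hap2 hcrc
    · exact apex_not_crole G hcubic hap2 hcrd
    · rcases crole_adj_apex G hcubic m1 m2 m4 m3 m5 m6 m7 hap2 hadj with rfl | rfl
      · exact huv rfl
      · exact hvb rfl
    · rcases crole_adj_apex G hcubic m1 m3 m5 m2 m4 (fun h' => m6 h'.symm) (Ne.symm m7)
        hap2 hadj with rfl | rfl
      · exact huv rfl
      · exact hvb rfl
  -- trep vs trep with equal parity
  have hTT : ∀ {s t : {s : Finset V // IsBlk G s}}, NonSing G s → NonSing G t →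
      (Even (depth G s) ↔ Even (depth G t)) → tRep G s ≠ tRep G t →
      G.edist (tRep G s) (tRep G t) ≤ 2 → False := by
    intro s t hns hnt hpar hne hle
    obtain ⟨hmems, hexs, hpars, htnes⟩ := tRep_spec G hcubic hns
    obtain ⟨hmemt, hext, hpart, htnet⟩ := tRep_spec G hcubic hnt
    have hblkne : s.1 ≠ t.1 := by
      intro h
      exact hne (congrArg (tRep G) (Subtype.ext h))
    rcases blk_conflict G hcubic s.2 t.2 hblkne hmems hmemt hle with hin | hin | heq
    · have hts : target G s = t := Subtype.ext (blk_unique G hcubic (target G s).2 t.2 hexs hin)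
      rw [hts] at hpars
      by_cases he : Even (depth G s)
      · exact hpars.mp (hpar.mp he) he
      · exact he (hpar.mpr (hpars.mpr he))
    · have hts : target G t = s := Subtype.ext (blk_unique G hcubic (target G t).2 s.2 hext hin)
      rw [hts] at hpart
      by_cases he : Even (depth G s)
      · exact hpart.mp he (hpar.mp he)
      · exact he (hpart.mpr (fun h => he (hpar.mpr h)))
    · have hexs' : extv G (tRep G s) ∈ (target G t).1 := by rw [heq]; exact hext
      have htt : target G s = target G t :=
        Subtype.ext (blk_unique G hcubic (target G s).2 (target G t).2 hexs hexs')
      have hadjz : G.Adj (extv G (tRep G s)) (tRep G s) :=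
        (extv_spec G hcubic s.2 hmems).1.symm
      have hadjz' : G.Adj (extv G (tRep G s)) (tRep G t) := by
        rw [heq]
        exact (extv_spec G hcubic t.2 hmemt).1.symm
      rcases (blk_nbr G hcubic (target G s).2 hexs (tRep G s)).mp hadjz with ⟨hmem1, _⟩ | he1
      · exact htnes (Subtype.ext (blk_unique G hcubic (target G s).2 s.2 hmem1 hmems))
      · rcases (blk_nbr G hcubic (target G s).2 hexs (tRep G t)).mp hadjz' with ⟨hmem2, _⟩ | he2
        · rw [htt] at hmem2
          exact htnet (Subtype.ext (blk_unique G hcubic (target G t).2 t.2 hmem2 hmemt))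
        · exact hne (he1.trans he2.symm)
  -- trep vs drep
  have hTD : ∀ {s t : {s : Finset V // IsBlk G s}}, NonSing G s → ¬ NonSing G t → HasD G t →
      G.edist (tRep G s) (dRep G t) ≤ 2 → False := by
    intro s t hns hsg hhd hle
    obtain ⟨hmems, hexs, _, _⟩ := tRep_spec G hcubic hns
    obtain ⟨hmemt, hcr⟩ := dRep_spec G hhd
    have hblkne : s.1 ≠ t.1 := fun h => hsg (Subtype.ext h ▸ hns)
    rcases blk_conflict G hcubic s.2 t.2 hblkne hmems hmemt hle with hin | hin | heq
    · have hts : target G s = t := Subtype.ext (blk_unique G hcubic (target G s).2 t.2 hexs hin)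
      exact hsg (hts ▸ ⟨s, (target_adj G hns).symm⟩)
    · exact crole_not_blk G hcubic hcr s.2 hin
    · exact crole_not_blk G hcubic (by rw [heq]; exact hcr) (target G s).2 hexs
  -- trep vs prep
  have hTP : ∀ {s : {s : Finset V // IsBlk G s}}
      {p : {q : {s : Finset V // IsBlk G s} // PS G q}}, NonSing G s →
      G.edist (tRep G s) (portOf G p.1 (f p)) ≤ 2 → False := by
    intro s p hns hle
    obtain ⟨hmems, hexs, _, _⟩ := tRep_spec G hcubic hns
    obtain ⟨hmemp, hexp⟩ := hpspec p
    have hblkne : s.1 ≠ p.1.1 := fun h => p.2.1 (Subtype.ext h ▸ hns)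
    rcases blk_conflict G hcubic s.2 p.1.2 hblkne hmems hmemp hle with hin | hin | heq
    · have hts : target G s = p.1 :=
        Subtype.ext (blk_unique G hcubic (target G s).2 p.1.2 hexs hin)
      exact p.2.1 (hts ▸ ⟨s, (target_adj G hns).symm⟩)
    · exact sing_ext_not_blk G hcubic p.2.1 hmemp s.2 hin
    · exact sing_ext_not_blk G hcubic p.2.1 hmemp (target G s).2 (by rw [← heq]; exact hexs)
  -- drep vs drep
  have hDD : ∀ {s t : {s : Finset V // IsBlk G s}}, ¬ NonSing G s → HasD G s →
      ¬ NonSing G t → HasD G t → dRep G s ≠ dRep G t →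
      G.edist (dRep G s) (dRep G t) ≤ 2 → False := by
    intro s t _ hds _ hdt hne hle
    obtain ⟨hmems, hcrs⟩ := dRep_spec G hds
    obtain ⟨hmemt, hcrt⟩ := dRep_spec G hdt
    have hblkne : s.1 ≠ t.1 := by
      intro h
      exact hne (congrArg (dRep G) (Subtype.ext h))
    rcases blk_conflict G hcubic s.2 t.2 hblkne hmems hmemt hle with hin | hin | heq
    · exact crole_not_blk G hcubic hcrs t.2 hin
    · exact crole_not_blk G hcubic hcrt s.2 hin
    · exact hne (crole_two_ports G hcubic hcrs (extv_spec G hcubic s.2 hmems).1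
        (by rw [heq]; exact (extv_spec G hcubic t.2 hmemt).1) s.2 t.2 hmems hmemt)
  -- drep vs prep
  have hDP : ∀ {s : {s : Finset V // IsBlk G s}}
      {p : {q : {s : Finset V // IsBlk G s} // PS G q}}, ¬ NonSing G s → HasD G s →
      G.edist (dRep G s) (portOf G p.1 (f p)) ≤ 2 → False := by
    intro s p hsg hds hle
    obtain ⟨hmems, hcrs⟩ := dRep_spec G hds
    obtain ⟨hmemp, hexp⟩ := hpspec p
    have hblkne : s.1 ≠ p.1.1 := by
      intro h
      exact p.2.2 (Subtype.ext h ▸ hds)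
    rcases blk_conflict G hcubic s.2 p.1.2 hblkne hmems hmemp hle with hin | hin | heq
    · exact crole_not_blk G hcubic hcrs p.1.2 hin
    · exact sing_ext_not_blk G hcubic p.2.1 hmemp s.2 hin
    · exact p.2.2 ⟨portOf G p.1 (f p), hmemp, by rw [← heq]; exact hcrs⟩
  -- prep vs prep
  have hPP : ∀ {p q : {q : {s : Finset V // IsBlk G s} // PS G q}},
      portOf G p.1 (f p) ≠ portOf G q.1 (f q) →
      G.edist (portOf G p.1 (f p)) (portOf G q.1 (f q)) ≤ 2 → False := by
    intro p q hne hle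
    obtain ⟨hmemp, hexp⟩ := hpspec p
    obtain ⟨hmemq, hexq⟩ := hpspec q
    have hpq : p ≠ q := fun h => hne (by rw [h])
    have hblkne : p.1.1 ≠ q.1.1 := fun h => hpq (Subtype.ext (Subtype.ext h))
    rcases blk_conflict G hcubic p.1.2 q.1.2 hblkne hmemp hmemq hle with hin | hin | heq
    · exact sing_ext_not_blk G hcubic p.2.1 hmemp q.1.2 hin
    · exact sing_ext_not_blk G hcubic q.2.1 hmemq p.1.2 hin
    · rw [hexp, hexq] at heq
      exact hpq (hfinj heq)
  -- ======================= disjointness =======================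
  have hdisj : Disjoint XS YS := by
    rw [Set.disjoint_left]
    intro v hvX hvY
    rw [hXS, Set.mem_setOf_eq] at hvX
    rw [hYS, Set.mem_setOf_eq] at hvY
    rcases hvX with ⟨hk, hmin⟩ | ⟨hap, _⟩ | ⟨s, hns, hev, rfl⟩
    · rcases hvY with ⟨_, hsnd⟩ | ⟨t, hnt, _, rfl⟩ | ⟨t, _, hdt, rfl⟩ | ⟨p, rfl⟩
      · exact (ksnd_props G hcubic v).2 (hsnd ▸ hmin ▸ rfl)
      · exact k4_not_blk G hcubic hk t.2 (tRep_spec G hcubic hnt).1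
      · exact k4_not_blk G hcubic hk t.2 (dRep_spec G hdt).1
      · exact k4_not_blk G hcubic hk p.1.2 (hpspec p).1
    · rcases hvY with ⟨hk2, _⟩ | ⟨t, hnt, _, rfl⟩ | ⟨t, _, hdt, rfl⟩ | ⟨p, rfl⟩
      · exact k4_not_apex G hcubic hk2 hap
      · exact apex_not_blk G hcubic hap t.2 (tRep_spec G hcubic hnt).1
      · exact apex_not_blk G hcubic hap t.2 (dRep_spec G hdt).1
      · exact apex_not_blk G hcubic hap p.1.2 (hpspec p).1
    · rcases hvY with ⟨hk2, _⟩ | ⟨t, hnt, hod, heq⟩ | ⟨t, hsg, hdt, heq⟩ | ⟨p, heq⟩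
      · exact k4_not_blk G hcubic hk2 s.2 (tRep_spec G hcubic hns).1
      · have h1 := (tRep_spec G hcubic hns).1
        have h2 := (tRep_spec G hcubic hnt).1
        rw [← heq] at h2
        have hst : s = t := Subtype.ext (blk_unique G hcubic s.2 t.2 h1 h2)
        rw [← hst] at hod
        exact hod hev
      · have h1 := (tRep_spec G hcubic hns).1
        have h2 := (dRep_spec G hdt).1
        rw [← heq] at h2
        exact hsg (Subtype.ext (blk_unique G hcubic t.2 s.2 h2 h1) ▸ hns)
      · have h1 := (tRep_spec G hcubic hns).1
        have h2 := (hpspec p).1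
        rw [← heq] at h2
        exact p.2.1 (Subtype.ext (blk_unique G hcubic p.1.2 s.2 h2 h1) ▸ hns)
  -- ======================= X is a 2-packing =======================
  have hXpack : TwoPacking G XS := by
    intro u hu v hv huv
    by_contra hgt
    rw [not_lt] at hgt
    rw [hXS, Set.mem_setOf_eq] at hu hv
    have hgt' : G.edist v u ≤ 2 := by rwa [SimpleGraph.edist_comm] at hgt
    rcases hu with ⟨hk, hmin⟩ | ⟨hap, hlt⟩ | ⟨s, hns, hev, rfl⟩
    · obtain ⟨hkv, hFv⟩ := hK4gen hk hgt
      rcases hv with ⟨hk2, hmin2⟩ | ⟨hap2, _⟩ | ⟨t, hnt, _, rfl⟩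
      · exact huv (hmin.trans ((kmin_eq G hFv).symm.trans hmin2.symm))
      · exact k4_not_apex G hcubic hkv hap2
      · exact k4_not_blk G hcubic hkv t.2 (tRep_spec G hcubic hnt).1
    · rcases hv with ⟨hk2, _⟩ | ⟨hap2, hlt2⟩ | ⟨t, hnt, _, rfl⟩
      · obtain ⟨hku, _⟩ := hK4gen hk2 hgt'
        exact k4_not_apex G hcubic hku hap
      · exact hAA hap hlt hap2 hlt2 huv hgt
      · exact apex_noncrole_sep G hcubic hap t.2 (tRep_spec G hcubic hnt).1 (hTnc hnt) hgt
    · rcases hv with ⟨hk2, _⟩ | ⟨hap2, _⟩ | ⟨t, hnt, hev2, rfl⟩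
      · obtain ⟨hku, _⟩ := hK4gen hk2 hgt'
        exact k4_not_blk G hcubic hku s.2 (tRep_spec G hcubic hns).1
      · exact apex_noncrole_sep G hcubic hap2 s.2 (tRep_spec G hcubic hns).1 (hTnc hns) hgt'
      · exact hTT hns hnt (iff_of_true hev hev2) huv hgt
  -- ======================= Y is a 2-packing =======================
  have hYpack : TwoPacking G YS := by
    intro u hu v hv huv
    by_contra hgt
    rw [not_lt] at hgt
    rw [hYS, Set.mem_setOf_eq] at hu hv
    have hgt' : G.edist v u ≤ 2 := by rwa [SimpleGraph.edist_comm] at hgt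
    rcases hu with ⟨hk, hsnd⟩ | ⟨s, hns, hod, rfl⟩ | ⟨s, hsg, hds, rfl⟩ | ⟨p, rfl⟩
    · obtain ⟨hkv, hFv⟩ := hK4gen hk hgt
      rcases hv with ⟨hk2, hsnd2⟩ | ⟨t, hnt, _, rfl⟩ | ⟨t, _, hdt, rfl⟩ | ⟨q, rfl⟩
      · exact huv (hsnd.trans ((ksnd_eq G hcubic hFv).symm.trans hsnd2.symm))
      · exact k4_not_blk G hcubic hkv t.2 (tRep_spec G hcubic hnt).1
      · exact k4_not_blk G hcubic hkv t.2 (dRep_spec G hdt).1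
      · exact k4_not_blk G hcubic hkv q.1.2 (hpspec q).1
    · rcases hv with ⟨hk2, _⟩ | ⟨t, hnt, hod2, rfl⟩ | ⟨t, hsgt, hdt, rfl⟩ | ⟨q, rfl⟩
      · obtain ⟨hku, _⟩ := hK4gen hk2 hgt'
        exact k4_not_blk G hcubic hku s.2 (tRep_spec G hcubic hns).1
      · exact hTT hns hnt (iff_of_false hod hod2) huv hgt
      · exact hTD hns hsgt hdt hgt
      · exact hTP hns hgt
    · rcases hv with ⟨hk2, _⟩ | ⟨t, hnt, _, rfl⟩ | ⟨t, hsgt, hdt, rfl⟩ | ⟨q, rfl⟩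
      · obtain ⟨hku, _⟩ := hK4gen hk2 hgt'
        exact k4_not_blk G hcubic hku s.2 (dRep_spec G hds).1
      · exact hTD hnt hsg hds hgt'
      · exact hDD hsg hds hsgt hdt huv hgt
      · exact hDP hsg hds hgt
    · rcases hv with ⟨hk2, _⟩ | ⟨t, hnt, _, rfl⟩ | ⟨t, hsgt, hdt, rfl⟩ | ⟨q, rfl⟩
      · obtain ⟨hku, _⟩ := hK4gen hk2 hgt'
        exact k4_not_blk G hcubic hku p.1.2 (hpspec p).1
      · exact hTP hnt hgt'
      · exact hDP hsgt hdt hgt'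
      · exact hPP huv hgt
  -- ======================= coverage =======================
  have hcover : ∀ a b c : V, IsTriangle G a b c →
      ∃ w, (w = a ∨ w = b ∨ w = c) ∧ (w ∈ XS ∨ w ∈ YS) := by
    intro a b c hT
    obtain ⟨hab, hac, hbc⟩ := hT
    have hmemT : ∀ w, w ∈ ({a, b, c} : Finset V) ↔ (w = a ∨ w = b ∨ w = c) := by
      intro w; simp
    by_cases hblk : IsBlk G ({a, b, c} : Finset V)
    · set s : {s : Finset V // IsBlk G s} := ⟨{a, b, c}, hblk⟩ with hsdef
      by_cases hns : NonSing G s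
      · refine ⟨tRep G s, (hmemT _).mp (tRep_spec G hcubic hns).1, ?_⟩
        by_cases hev : Even (depth G s)
        · exact Or.inl (by rw [hXS]; exact Or.inr (Or.inr ⟨s, hns, hev, rfl⟩))
        · exact Or.inr (by rw [hYS]; exact Or.inr (Or.inl ⟨s, hns, hev, rfl⟩))
      · by_cases hd : HasD G s
        · exact ⟨dRep G s, (hmemT _).mp (dRep_spec G hd).1,
            Or.inr (by rw [hYS]; exact Or.inr (Or.inr (Or.inl ⟨s, hns, hd, rfl⟩)))⟩
        · set p : {q : {s : Finset V // IsBlk G s} // PS G q} := ⟨s, hns, hd⟩ with hpdef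
          exact ⟨portOf G p.1 (f p), (hmemT _).mp (hpspec p).1,
            Or.inr (by rw [hYS]; exact Or.inr (Or.inr (Or.inr ⟨p, rfl⟩)))⟩
    · have htri : ∃ a' b' c' : V, a' ≠ b' ∧ a' ≠ c' ∧ b' ≠ c' ∧ G.Adj a' b' ∧ G.Adj a' c' ∧
          G.Adj b' c' ∧ ({a, b, c} : Finset V) = {a', b', c'} :=
        ⟨a, b, c, G.ne_of_adj hab, G.ne_of_adj hac, G.ne_of_adj hbc, hab, hac, hbc, rfl⟩
      have hB : ¬ ∀ z ∉ ({a, b, c} : Finset V),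
          ¬ (∃ x ∈ ({a, b, c} : Finset V), ∃ y ∈ ({a, b, c} : Finset V),
            x ≠ y ∧ G.Adj z x ∧ G.Adj z y) := fun h => hblk ⟨htri, h⟩
      push_neg at hB
      obtain ⟨z, hzT, x, hxT, y, hyT, hxy, hzx, hzy⟩ := hB
      have hadjT : ∀ u v, u ∈ ({a, b, c} : Finset V) → v ∈ ({a, b, c} : Finset V) →
          u ≠ v → G.Adj u v := by
        intro u v hu hv huv
        rw [hmemT] at hu hv
        rcases hu with rfl | rfl | rfl <;> rcases hv with rfl | rfl | rfl <;>
          first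
          | exact absurd rfl huv
          | assumption
          | exact hab.symm
          | exact hac.symm
          | exact hbc.symm
      obtain ⟨t3, ht3T, ht3x, ht3y⟩ : ∃ t3, t3 ∈ ({a, b, c} : Finset V) ∧ t3 ≠ x ∧ t3 ≠ y := by
        have hxT' := (hmemT x).mp hxT
        have hyT' := (hmemT y).mp hyT
        rcases hxT' with rfl | rfl | rfl <;> rcases hyT' with rfl | rfl | rfl <;>
          first
          | exact absurd rfl hxy
          | exact ⟨c, (hmemT c).mpr (by tauto), Ne.symm (G.ne_of_adj hac),
              Ne.symm (G.ne_of_adj hbc)⟩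
          | exact ⟨b, (hmemT b).mpr (by tauto), Ne.symm (G.ne_of_adj hab),
              G.ne_of_adj hbc⟩
          | exact ⟨a, (hmemT a).mpr (by tauto), G.ne_of_adj hab, G.ne_of_adj hac⟩
          | exact ⟨c, (hmemT c).mpr (by tauto), Ne.symm (G.ne_of_adj hbc),
              Ne.symm (G.ne_of_adj hac)⟩
          | exact ⟨b, (hmemT b).mpr (by tauto), G.ne_of_adj hbc,
              Ne.symm (G.ne_of_adj hab)⟩
          | exact ⟨a, (hmemT a).mpr (by tauto), G.ne_of_adj hac, G.ne_of_adj hab⟩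
      have hzx' : z ≠ x := fun h => hzT (h ▸ hxT)
      have hzy' : z ≠ y := fun h => hzT (h ▸ hyT)
      have hzt3' : z ≠ t3 := fun h => hzT (h ▸ ht3T)
      have haxy : G.Adj x y := hadjT x y hxT hyT hxy
      have haxt : G.Adj x t3 := hadjT x t3 hxT ht3T (Ne.symm ht3x)
      have hayt : G.Adj y t3 := hadjT y t3 hyT ht3T (Ne.symm ht3y)
      by_cases hzt3 : G.Adj z t3
      · -- K4 case
        have hk : InK4 G x := ⟨y, t3, z, Ne.symm ht3y, Ne.symm hzy', Ne.symm hzt3',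
          haxy, haxt, hzx.symm, hayt, hzy.symm, hzt3.symm⟩
        have hFx : K4F G x = {x, y, t3, z} :=
          k4_nbrF G hcubic (Ne.symm ht3y) (Ne.symm hzy') (Ne.symm hzt3') haxy haxt hzx.symm
        have hm1F : kmin G x ∈ K4F G x := Finset.min'_mem _ _
        obtain ⟨hk1, hF1⟩ := k4_mem G hcubic hk hm1F
        have hm1X : kmin G x ∈ XS := by
          rw [hXS]
          exact Or.inl ⟨hk1, (kmin_eq G hF1).symm⟩
        obtain ⟨hsndF, hsndne⟩ := ksnd_props G hcubic x
        obtain ⟨hk2, hF2⟩ := k4_mem G hcubic hk hsndF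
        have hm2Y : ksnd G x ∈ YS := by
          rw [hYS]
          exact Or.inl ⟨hk2, (ksnd_eq G hcubic hF2).symm⟩
        by_cases hminz : kmin G x = z
        · have hsm : ksnd G x ∈ ({x, y, t3, z} : Finset V) := hFx ▸ hsndF
          simp only [Finset.mem_insert, Finset.mem_singleton] at hsm
          rcases hsm with h2 | h2 | h2 | h2
          · exact ⟨ksnd G x, by rw [h2]; exact (hmemT _).mp hxT, Or.inr hm2Y⟩
          · exact ⟨ksnd G x, by rw [h2]; exact (hmemT _).mp hyT, Or.inr hm2Y⟩
          · exact ⟨ksnd G x, by rw [h2]; exact (hmemT _).mp ht3T, Or.inr hm2Y⟩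
          · exact absurd (h2.trans hminz.symm) hsndne
        · have hsm : kmin G x ∈ ({x, y, t3, z} : Finset V) := hFx ▸ hm1F
          simp only [Finset.mem_insert, Finset.mem_singleton] at hsm
          rcases hsm with h2 | h2 | h2 | h2
          · exact ⟨kmin G x, by rw [h2]; exact (hmemT _).mp hxT, Or.inl hm1X⟩
          · exact ⟨kmin G x, by rw [h2]; exact (hmemT _).mp hyT, Or.inl hm1X⟩
          · exact ⟨kmin G x, by rw [h2]; exact (hmemT _).mp ht3T, Or.inl hm1X⟩
          · exact absurd h2 hminz
      · -- diamond case
        have hnzt3 : ¬ G.Adj t3 z := fun h => hzt3 h.symm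
        have hapx : Apex G x := ⟨y, t3, z, haxy, haxt, hzx.symm, hayt, hzy.symm, hnzt3,
          Ne.symm hzt3'⟩
        have hapy : Apex G y := ⟨x, t3, z, haxy.symm, hayt, hzy.symm, haxt, hzx.symm, hnzt3,
          Ne.symm hzt3'⟩
        have hcox : coapex G x = y :=
          coapex_eq G hcubic haxy haxt hzx.symm hayt hzy.symm hnzt3 (Ne.symm hzt3')
        have hcoy : coapex G y = x :=
          coapex_eq G hcubic haxy.symm hayt hzy.symm haxt hzx.symm hnzt3 (Ne.symm hzt3')
        rcases lt_trichotomy x y with hlt | heq | hlt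
        · exact ⟨x, (hmemT x).mp hxT, Or.inl (by
            rw [hXS]
            exact Or.inr (Or.inl ⟨hapx, by rw [hcox]; exact hlt⟩))⟩
        · exact absurd heq hxy
        · exact ⟨y, (hmemT y).mp hyT, Or.inl (by
            rw [hXS]
            exact Or.inr (Or.inl ⟨hapy, by rw [hcoy]; exact hlt⟩))⟩
  refine ⟨XS, YS, hdisj, hXpack, hYpack, ?_⟩
  intro a b c ha hb hc hT
  obtain ⟨w, hw, hwXY⟩ := hcover a b c hT
  have hwmem : w ∈ XS ∪ YS := by
    rcases hwXY with h | h
    · exact Set.mem_union_left _ h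
    · exact Set.mem_union_right _ h
  rcases hw with rfl | rfl | rfl
  · exact ha hwmem
  · exact hb hwmem
  · exact hc hwmem
end

section
/- Every finite claw-free cubic graph admits a (1,1,2,2)-packing coloring; that is, its vertex set can be partitioned into four sets A1, A2, B1, B2 where A1 and A2 are independent sets (1-packings) and B1 and B2 are 2-packings. -/
def ClawFree {V : Type*} (G : SimpleGraph V) : Prop :=
  ¬ ∃ v a b c : V, G.Adj v a ∧ G.Adj v b ∧ G.Adj v c ∧
    ¬ G.Adj a b ∧ ¬ G.Adj a c ∧ ¬ G.Adj b c ∧ a ≠ b ∧ a ≠ c ∧ b ≠ c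

def IndepSet {V : Type*} (G : SimpleGraph V) (S : Set V) : Prop :=
  ∀ u ∈ S, ∀ v ∈ S, ¬ G.Adj u v

namespace P1122

open SimpleGraph Classical

variable {V : Type*} [Fintype V] (G : SimpleGraph V) [DecidableRel G.Adj]

/-! ### Basic helpers -/

/-- every vertex has exactly three neighbours -/
lemma exists_three_nbrs (hc : IsCubic G) (v : V) :
    ∃ a b c : V, a ≠ b ∧ a ≠ c ∧ b ≠ c ∧ G.Adj v a ∧ G.Adj v b ∧ G.Adj v c ∧
      (∀ y, G.Adj v y → y = a ∨ y = b ∨ y = c) := by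
  have h3 : (G.neighborFinset v).card = 3 := hc v
  obtain ⟨a, b, c, hab, hac, hbc, hs⟩ := Finset.card_eq_three.mp h3
  refine ⟨a, b, c, hab, hac, hbc, ?_, ?_, ?_, ?_⟩
  · rw [← SimpleGraph.mem_neighborFinset, hs]; simp
  · rw [← SimpleGraph.mem_neighborFinset, hs]; simp
  · rw [← SimpleGraph.mem_neighborFinset, hs]; simp
  · intro y hy
    have : y ∈ G.neighborFinset v := by simpa using hy
    rw [hs] at this; simpa using this

/-- neighbour exhaustion given three known distinct neighbours -/
lemma nbrs_exhaust (hc : IsCubic G) {v a b c : V} (hab : a ≠ b) (hac : a ≠ c) (hbc : b ≠ c)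
    (ha : G.Adj v a) (hb : G.Adj v b) (hcc : G.Adj v c) :
    ∀ y, G.Adj v y → y = a ∨ y = b ∨ y = c := by
  have hsub : ({a, b, c} : Finset V) ⊆ G.neighborFinset v := by
    intro y hy
    simp only [Finset.mem_insert, Finset.mem_singleton] at hy
    rcases hy with rfl | rfl | rfl <;> rw [G.mem_neighborFinset] <;> assumption
  have hcard : ({a, b, c} : Finset V).card = 3 := by
    rw [Finset.card_insert_of_notMem (by simp [hab, hac]),
      Finset.card_insert_of_notMem (by simp [hbc])]
    rfl
  have heq : G.neighborFinset v = ({a, b, c} : Finset V) :=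
    (Finset.eq_of_subset_of_card_le hsub (by rw [hcard]; exact le_of_eq (hc v))).symm
  intro y hy
  have : y ∈ G.neighborFinset v := by simpa using hy
  rw [heq] at this; simpa using this

/-- given two distinct neighbours there is a unique third one -/
lemma exists_third (hc : IsCubic G) {v a b : V} (ha : G.Adj v a) (hb : G.Adj v b)
    (hab : a ≠ b) :
    ∃ e, e ≠ a ∧ e ≠ b ∧ G.Adj v e ∧ ∀ y, G.Adj v y → y = a ∨ y = b ∨ y = e := by
  have h3 : (G.neighborFinset v).card = 3 := hc v
  have hne : (G.neighborFinset v \ {a, b}).Nonempty := by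
    rw [← Finset.card_pos]
    have h2 : ({a, b} : Finset V).card ≤ 2 := Finset.card_insert_le _ _
    have hle := Finset.card_le_card_sdiff_add_card (s := G.neighborFinset v)
      (t := ({a, b} : Finset V))
    omega
  obtain ⟨e, he⟩ := hne
  rw [Finset.mem_sdiff] at he
  obtain ⟨he1, he2⟩ := he
  simp only [Finset.mem_insert, Finset.mem_singleton, not_or] at he2
  have hadj : G.Adj v e := by simpa using he1
  refine ⟨e, he2.1, he2.2, hadj, ?_⟩
  exact nbrs_exhaust G hc hab (Ne.symm he2.1) (Ne.symm he2.2) ha hb hadj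

lemma claw_pair (hcl : ClawFree G) {v a b c : V} (ha : G.Adj v a) (hb : G.Adj v b)
    (hcc : G.Adj v c) (hab : a ≠ b) (hac : a ≠ c) (hbc : b ≠ c) :
    G.Adj a b ∨ G.Adj a c ∨ G.Adj b c := by
  by_contra h
  push_neg at h
  exact hcl ⟨v, a, b, c, ha, hb, hcc, h.1, h.2.1, h.2.2, hab, hac, hbc⟩

lemma two_lt_edist {u v : V} (hne : u ≠ v) (hadj : ¬ G.Adj u v)
    (hcom : ∀ w, G.Adj u w → G.Adj w v → False) : 2 < G.edist u v := by
  by_contra h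
  push_neg at h
  have hne_top : G.edist u v ≠ ⊤ := by
    intro ht; rw [ht] at h; exact absurd h (by simp)
  obtain ⟨p, hp⟩ := SimpleGraph.exists_walk_of_edist_ne_top hne_top
  have hlen : p.length ≤ 2 := by
    have : (p.length : ℕ∞) ≤ 2 := by rw [hp]; exact h
    exact_mod_cast this
  cases p with
  | nil => exact hne rfl
  | cons h1 q =>
    cases q with
    | nil => exact hadj h1
    | cons h2 r =>
      cases r with
      | nil => exact hcom _ h1 h2
      | cons h3 t => simp [SimpleGraph.Walk.length_cons] at hlen

/-! ### Units -/

/-- diamond with ports `p q` and internal vertices `r t` -/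
def IsDia (p q r t : V) : Prop :=
  ¬ G.Adj p q ∧ p ≠ q ∧ G.Adj p r ∧ G.Adj p t ∧ G.Adj q r ∧ G.Adj q t ∧ G.Adj r t

/-- pure triangle -/
def IsTri (x y z : V) : Prop :=
  G.Adj x y ∧ G.Adj x z ∧ G.Adj y z ∧
    (∀ w, G.Adj w y → G.Adj w z → w = x) ∧
    (∀ w, G.Adj w x → G.Adj w z → w = y) ∧
    (∀ w, G.Adj w x → G.Adj w y → w = z)

def IsK4 (a b c d : V) : Prop :=
  G.Adj a b ∧ G.Adj a c ∧ G.Adj a d ∧ G.Adj b c ∧ G.Adj b d ∧ G.Adj c d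

def K4Set (s : Finset V) : Prop := ∃ a b c d, IsK4 G a b c d ∧ s = {a, b, c, d}

def DiaSet (s : Finset V) : Prop := ∃ p q r t, IsDia G p q r t ∧ s = {p, q, r, t}

def TriSet (s : Finset V) : Prop := ∃ x y z, IsTri G x y z ∧ s = {x, y, z}

def UnitSet (s : Finset V) : Prop := K4Set G s ∨ DiaSet G s ∨ TriSet G s

/-- canonical closure description of the unit of `v` -/
def ClP (v w : V) : Prop :=
  w = v ∨ (G.Adj v w ∧ ∃ u, G.Adj v u ∧ G.Adj w u) ∨
    (¬ G.Adj v w ∧ ∃ u u', u ≠ u' ∧ G.Adj u u' ∧ G.Adj u v ∧ G.Adj u w ∧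
      G.Adj u' v ∧ G.Adj u' w)

lemma unit_ex_two (hc : IsCubic G) {v a b c : V} (hbc' : b ≠ c)
    (hva : G.Adj v a) (hvb : G.Adj v b) (hvc : G.Adj v c)
    (h1 : G.Adj a b) (h2 : G.Adj a c) (h3 : ¬ G.Adj b c) :
    ∃ s, UnitSet G s ∧ v ∈ s := by
  refine ⟨{b, c, v, a}, Or.inr (Or.inl ⟨b, c, v, a, ?_, rfl⟩), by simp⟩
  exact ⟨h3, hbc', hvb.symm, h1.symm, hvc.symm, h2.symm, hva⟩

lemma unit_ex_one (hc : IsCubic G) {v x y z : V}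
    (hvx : G.Adj v x) (hvy : G.Adj v y) (hvz : G.Adj v z)
    (hxy' : x ≠ y) (hxz' : x ≠ z) (hyz' : y ≠ z)
    (hxy : G.Adj x y) (hxz : ¬ G.Adj x z) (hyz : ¬ G.Adj y z) :
    ∃ s, UnitSet G s ∧ v ∈ s := by
  have hex := nbrs_exhaust G hc hxy' hxz' hyz' hvx hvy hvz
  by_cases hw : ∃ w, w ≠ v ∧ G.Adj w x ∧ G.Adj w y
  · obtain ⟨w, hwv, hwx, hwy⟩ := hw
    have hnadj : ¬ G.Adj v w := by
      intro h
      rcases hex w h with rfl | rfl | rfl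
      · exact G.irrefl hwx
      · exact G.irrefl hwy
      · exact hxz (hwx.symm)
    refine ⟨{v, w, x, y}, Or.inr (Or.inl ⟨v, w, x, y, ?_, rfl⟩), by simp⟩
    exact ⟨hnadj, hwv.symm, hvx, hvy, hwx, hwy, hxy⟩
  · push_neg at hw
    refine ⟨{v, x, y}, Or.inr (Or.inr ⟨v, x, y, ?_, rfl⟩), by simp⟩
    refine ⟨hvx, hvy, hxy, ?_, ?_, ?_⟩
    · intro w h1 h2
      by_contra hne
      exact hw w hne h1 h2
    · intro w h1 h2
      rcases hex w h1.symm with rfl | rfl | rfl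
      · rfl
      · exact absurd h2 G.irrefl
      · exact absurd h2.symm hyz
    · intro w h1 h2
      rcases hex w h1.symm with rfl | rfl | rfl
      · exact absurd h2 G.irrefl
      · rfl
      · exact absurd h2.symm hxz

lemma unit_ex (hc : IsCubic G) (hcl : ClawFree G) (v : V) :
    ∃ s, UnitSet G s ∧ v ∈ s := by
  obtain ⟨a, b, c, hab, hac, hbc, ha, hb, hcc, hex⟩ := exists_three_nbrs G hc v
  by_cases h1 : G.Adj a b <;> by_cases h2 : G.Adj a c <;> by_cases h3 : G.Adj b c
  · exact ⟨{v, a, b, c}, Or.inl ⟨v, a, b, c, ⟨ha, hb, hcc, h1, h2, h3⟩, rfl⟩, by simp⟩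
  · exact unit_ex_two G hc hbc ha hb hcc h1 h2 h3
  · exact unit_ex_two G hc hac hb ha hcc h1.symm h3 h2
  · exact unit_ex_one G hc ha hb hcc hab hac hbc h1 h2 h3
  · exact unit_ex_two G hc hab hcc ha hb h2.symm h3.symm h1
  · exact unit_ex_one G hc ha hcc hb hac hab (Ne.symm hbc) h2 h1 (fun h => h3 h.symm)
  · exact unit_ex_one G hc hb hcc ha hbc (Ne.symm hab) (Ne.symm hac) h3
      (fun h => h1 h.symm) (fun h => h2 h.symm)
  · rcases claw_pair G hcl ha hb hcc hab hac hbc with h | h | h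
    · exact absurd h h1
    · exact absurd h h2
    · exact absurd h h3

lemma dia_nbrs_int (hc : IsCubic G) {p q r t : V} (h : IsDia G p q r t) :
    ∀ y, G.Adj r y → y = p ∨ y = q ∨ y = t := by
  obtain ⟨hpq, hpqne, hpr, hpt, hqr, hqt, hrt⟩ := h
  exact nbrs_exhaust G hc hpqne hpt.ne hqt.ne hpr.symm hqr.symm hrt

lemma isDia_swap_ports {p q r t : V} (h : IsDia G p q r t) : IsDia G q p r t := by
  obtain ⟨hpq, hpqne, hpr, hpt, hqr, hqt, hrt⟩ := h
  exact ⟨fun h' => hpq h'.symm, hpqne.symm, hqr, hqt, hpr, hpt, hrt⟩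

lemma isDia_swap_ints {p q r t : V} (h : IsDia G p q r t) : IsDia G p q t r := by
  obtain ⟨hpq, hpqne, hpr, hpt, hqr, hqt, hrt⟩ := h
  exact ⟨hpq, hpqne, hpt, hpr, hqt, hqr, hrt.symm⟩

lemma dia_nbrs_port (hc : IsCubic G) {p q r t : V} (h : IsDia G p q r t) :
    ∃ e, e ≠ p ∧ e ≠ q ∧ e ≠ r ∧ e ≠ t ∧ G.Adj p e ∧
      ∀ y, G.Adj p y → y = r ∨ y = t ∨ y = e := by
  obtain ⟨hpq, hpqne, hpr, hpt, hqr, hqt, hrt⟩ := h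
  obtain ⟨e, her, het, hpe, hex⟩ := exists_third G hc hpr hpt hrt.ne
  exact ⟨e, fun h' => G.irrefl (h' ▸ hpe), fun h' => hpq (h' ▸ hpe), her, het, hpe, hex⟩

lemma tri_nbrs (hc : IsCubic G) {x y z : V} (h : IsTri G x y z) :
    ∃ e, e ≠ x ∧ e ≠ y ∧ e ≠ z ∧ G.Adj x e ∧
      ∀ w, G.Adj x w → w = y ∨ w = z ∨ w = e := by
  obtain ⟨hxy, hxz, hyz, f4, f5, f6⟩ := h
  obtain ⟨e, hey, hez, hxe, hex⟩ := exists_third G hc hxy hxz hyz.ne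
  exact ⟨e, fun h' => G.irrefl (h' ▸ hxe), hey, hez, hxe, hex⟩

lemma k4_nbrs (hc : IsCubic G) {a b c d : V} (h : IsK4 G a b c d) :
    ∀ y, G.Adj a y → y = b ∨ y = c ∨ y = d := by
  obtain ⟨h1, h2, h3, h4, h5, h6⟩ := h
  exact nbrs_exhaust G hc h4.ne h5.ne h6.ne h1 h2 h3

lemma k4_mem_first {a b c d v : V} (h : IsK4 G a b c d)
    (hv : v ∈ ({a, b, c, d} : Finset V)) :
    ∃ b' c' d', IsK4 G v b' c' d' ∧ ({a, b, c, d} : Finset V) = {v, b', c', d'} := by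
  obtain ⟨h1, h2, h3, h4, h5, h6⟩ := h
  simp only [Finset.mem_insert, Finset.mem_singleton] at hv
  rcases hv with rfl | rfl | rfl | rfl
  · exact ⟨b, c, d, ⟨h1, h2, h3, h4, h5, h6⟩, rfl⟩
  · exact ⟨a, c, d, ⟨h1.symm, h4, h5, h2, h3, h6⟩, by ext w; simp; tauto⟩
  · exact ⟨a, b, d, ⟨h2.symm, h4.symm, h6, h1, h3, h5⟩, by ext w; simp; tauto⟩
  · exact ⟨a, b, c, ⟨h3.symm, h5.symm, h6.symm, h1, h2, h4⟩, by ext w; simp; tauto⟩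

lemma dia_mem_first {p q r t v : V} (h : IsDia G p q r t)
    (hv : v ∈ ({p, q, r, t} : Finset V)) :
    (∃ q' r' t', IsDia G v q' r' t' ∧ ({p, q, r, t} : Finset V) = {v, q', r', t'}) ∨
    (∃ p' q' t', IsDia G p' q' v t' ∧ ({p, q, r, t} : Finset V) = {p', q', v, t'}) := by
  simp only [Finset.mem_insert, Finset.mem_singleton] at hv
  rcases hv with rfl | rfl | rfl | rfl
  · exact Or.inl ⟨q, r, t, h, rfl⟩
  · exact Or.inl ⟨p, r, t, isDia_swap_ports G h, by ext w; simp; tauto⟩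
  · exact Or.inr ⟨p, q, t, h, rfl⟩
  · exact Or.inr ⟨p, q, r, isDia_swap_ints G h, by ext w; simp; tauto⟩

lemma isTri_rot {x y z : V} (h : IsTri G x y z) : IsTri G y x z := by
  obtain ⟨hxy, hxz, hyz, f4, f5, f6⟩ := h
  exact ⟨hxy.symm, hyz, hxz, f5, f4, fun w h1 h2 => f6 w h2 h1⟩

lemma isTri_rot2 {x y z : V} (h : IsTri G x y z) : IsTri G z x y := by
  obtain ⟨hxy, hxz, hyz, f4, f5, f6⟩ := h
  exact ⟨hxz.symm, hyz.symm, hxy, f6, fun w h1 h2 => f4 w h2 h1, fun w h1 h2 => f5 w h2 h1⟩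

lemma tri_mem_first {x y z v : V} (h : IsTri G x y z)
    (hv : v ∈ ({x, y, z} : Finset V)) :
    ∃ y' z', IsTri G v y' z' ∧ ({x, y, z} : Finset V) = {v, y', z'} := by
  simp only [Finset.mem_insert, Finset.mem_singleton] at hv
  rcases hv with rfl | rfl | rfl
  · exact ⟨y, z, h, rfl⟩
  · exact ⟨x, z, isTri_rot G h, by ext w; simp; tauto⟩
  · exact ⟨x, y, isTri_rot2 G h, by ext w; simp; tauto⟩

lemma cl_k4 (hc : IsCubic G) {a b c d : V} (h : IsK4 G a b c d) :
    ∀ w, w ∈ ({a, b, c, d} : Finset V) ↔ ClP G a w := by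
  intro w
  have h' := h
  obtain ⟨h1, h2, h3, h4, h5, h6⟩ := h'
  constructor
  · intro hw
    simp only [Finset.mem_insert, Finset.mem_singleton] at hw
    rcases hw with rfl | rfl | rfl | rfl
    · exact Or.inl rfl
    · exact Or.inr (Or.inl ⟨h1, c, h2, h4⟩)
    · exact Or.inr (Or.inl ⟨h2, b, h1, h4.symm⟩)
    · exact Or.inr (Or.inl ⟨h3, b, h1, h5.symm⟩)
  · rintro (rfl | ⟨hadj, -⟩ | ⟨hnadj, u, u', hne', huu', hu, huw, hu', hu'w⟩)
    · simp
    · rcases k4_nbrs G hc h w hadj with rfl | rfl | rfl <;> simp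
    · have humem : u ∈ ({a, b, c, d} : Finset V) := by
        rcases k4_nbrs G hc h u hu.symm with rfl | rfl | rfl <;> simp
      obtain ⟨b', c', d', h'', hset⟩ := k4_mem_first G h humem
      rw [hset]
      rcases k4_nbrs G hc h'' w huw with rfl | rfl | rfl <;> simp

lemma cl_dia_port (hc : IsCubic G) {p q r t : V} (h : IsDia G p q r t) :
    ∀ w, w ∈ ({p, q, r, t} : Finset V) ↔ ClP G p w := by
  intro w
  have h' := h
  obtain ⟨hpq, hpqne, hpr, hpt, hqr, hqt, hrt⟩ := h'
  obtain ⟨e, hep, heq, her, het, hpe, hex⟩ := dia_nbrs_port G hc h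
  have hNr := dia_nbrs_int G hc h
  have hNt := dia_nbrs_int G hc (isDia_swap_ints G h)
  constructor
  · intro hw
    simp only [Finset.mem_insert, Finset.mem_singleton] at hw
    rcases hw with rfl | rfl | rfl | rfl
    · exact Or.inl rfl
    · exact Or.inr (Or.inr ⟨hpq, r, t, hrt.ne, hrt, hpr.symm, hqr.symm, hpt.symm, hqt.symm⟩)
    · exact Or.inr (Or.inl ⟨hpr, t, hpt, hrt⟩)
    · exact Or.inr (Or.inl ⟨hpt, r, hpr, hrt.symm⟩)
  · rintro (rfl | ⟨hadj, u, hu, hwu⟩ | ⟨hnadj, u, u', hne', huu', hu, huw, hu', hu'w⟩)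
    · simp
    · rcases hex w hadj with rfl | rfl | rfl
      · simp
      · simp
      · exfalso
        rcases hex u hu with rfl | rfl | rfl
        · rcases hNr w hwu.symm with rfl | rfl | rfl
          · exact G.irrefl hadj
          · exact heq rfl
          · exact het rfl
        · rcases hNt w hwu.symm with rfl | rfl | rfl
          · exact G.irrefl hadj
          · exact heq rfl
          · exact her rfl
        · exact G.irrefl hwu
    · have hre : ¬ G.Adj r e := by
        intro hh
        rcases hNr e hh with rfl | rfl | rfl
        · exact hep rfl
        · exact heq rfl
        · exact het rfl
      have hte : ¬ G.Adj t e := by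
        intro hh
        rcases hNt e hh with rfl | rfl | rfl
        · exact hep rfl
        · exact heq rfl
        · exact her rfl
      have hrtw : G.Adj r w ∧ G.Adj t w := by
        rcases hex u hu.symm with rfl | rfl | rfl <;> rcases hex u' hu'.symm with rfl | rfl | rfl
        · exact absurd rfl hne'
        · exact ⟨huw, hu'w⟩
        · exact absurd huu' hre
        · exact ⟨hu'w, huw⟩
        · exact absurd rfl hne'
        · exact absurd huu' hte
        · exact absurd huu'.symm hre
        · exact absurd huu'.symm hte
        · exact absurd rfl hne'
      rcases hNr w hrtw.1 with rfl | rfl | rfl <;> simp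

lemma cl_dia_int (hc : IsCubic G) {p q r t : V} (h : IsDia G p q r t) :
    ∀ w, w ∈ ({p, q, r, t} : Finset V) ↔ ClP G r w := by
  intro w
  have h' := h
  obtain ⟨hpq, hpqne, hpr, hpt, hqr, hqt, hrt⟩ := h'
  have hNr := dia_nbrs_int G hc h
  have hNt := dia_nbrs_int G hc (isDia_swap_ints G h)
  constructor
  · intro hw
    simp only [Finset.mem_insert, Finset.mem_singleton] at hw
    rcases hw with rfl | rfl | rfl | rfl
    · exact Or.inr (Or.inl ⟨hpr.symm, t, hrt, hpt⟩)
    · exact Or.inr (Or.inl ⟨hqr.symm, t, hrt, hqt⟩)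
    · exact Or.inl rfl
    · exact Or.inr (Or.inl ⟨hrt, p, hpr.symm, hpt.symm⟩)
  · rintro (rfl | ⟨hadj, -⟩ | ⟨hnadj, u, u', hne', huu', hu, huw, hu', hu'w⟩)
    · simp
    · rcases hNr w hadj with rfl | rfl | rfl <;> simp
    · have htw : G.Adj t w := by
        rcases hNr u hu.symm with rfl | rfl | rfl <;> rcases hNr u' hu'.symm with rfl | rfl | rfl
        · exact absurd rfl hne'
        · exact absurd huu' hpq
        · exact hu'w
        · exact absurd huu'.symm hpq
        · exact absurd rfl hne'
        · exact hu'w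
        · exact huw
        · exact huw
        · exact absurd rfl hne'
      rcases hNt w htw with rfl | rfl | rfl <;> simp

lemma cl_tri (hc : IsCubic G) {x y z : V} (h : IsTri G x y z) :
    ∀ w, w ∈ ({x, y, z} : Finset V) ↔ ClP G x w := by
  intro w
  have h' := h
  obtain ⟨hxy, hxz, hyz, f4, f5, f6⟩ := h'
  obtain ⟨e, hex', hey, hez, hxe, hex⟩ := tri_nbrs G hc h
  constructor
  · intro hw
    simp only [Finset.mem_insert, Finset.mem_singleton] at hw
    rcases hw with rfl | rfl | rfl
    · exact Or.inl rfl
    · exact Or.inr (Or.inl ⟨hxy, z, hxz, hyz⟩)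
    · exact Or.inr (Or.inl ⟨hxz, y, hxy, hyz.symm⟩)
  · rintro (rfl | ⟨hadj, u, hu, hwu⟩ | ⟨hnadj, u, u', hne', huu', hu, huw, hu', hu'w⟩)
    · simp
    · rcases hex w hadj with rfl | rfl | rfl
      · simp
      · simp
      · exfalso
        rcases hex u hu with rfl | rfl | rfl
        · exact hez (f6 w hadj.symm hwu)
        · exact hey (f5 w hadj.symm hwu)
        · exact G.irrefl hwu
    · have hyzw : G.Adj y w ∧ G.Adj z w := by
        have hye : ¬ G.Adj y e := fun hh => hez (f6 e hxe.symm hh.symm)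
        have hze : ¬ G.Adj z e := fun hh => hey (f5 e hxe.symm hh.symm)
        rcases hex u hu.symm with rfl | rfl | rfl <;> rcases hex u' hu'.symm with rfl | rfl | rfl
        · exact absurd rfl hne'
        · exact ⟨huw, hu'w⟩
        · exact absurd huu' hye
        · exact ⟨hu'w, huw⟩
        · exact absurd rfl hne'
        · exact absurd huu' hze
        · exact absurd huu'.symm hye
        · exact absurd huu'.symm hze
        · exact absurd rfl hne'
      have := f4 w hyzw.1.symm hyzw.2.symm
      simp [this]

lemma unitset_cl (hc : IsCubic G) {s : Finset V} (hs : UnitSet G s) {v : V} (hv : v ∈ s) :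
    ∀ w, w ∈ s ↔ ClP G v w := by
  rcases hs with ⟨a, b, c, d, h, rfl⟩ | ⟨p, q, r, t, h, rfl⟩ | ⟨x, y, z, h, rfl⟩
  · obtain ⟨b', c', d', h', hset⟩ := k4_mem_first G h hv
    rw [hset]
    exact cl_k4 G hc h'
  · rcases dia_mem_first G h hv with ⟨q', r', t', h', hset⟩ | ⟨p', q', t', h', hset⟩
    · rw [hset]; exact cl_dia_port G hc h'
    · rw [hset]; exact cl_dia_int G hc h'
  · obtain ⟨y', z', h', hset⟩ := tri_mem_first G h hv
    rw [hset]
    exact cl_tri G hc h'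

lemma unitset_unique (hc : IsCubic G) {s t : Finset V} (hs : UnitSet G s) (ht : UnitSet G t)
    {v : V} (hvs : v ∈ s) (hvt : v ∈ t) : s = t := by
  have h1 := unitset_cl G hc hs hvs
  have h2 := unitset_cl G hc ht hvt
  ext w; rw [h1 w, h2 w]

noncomputable def cell (v : V) : Finset V :=
  Classical.epsilon (fun s => UnitSet G s ∧ v ∈ s)

lemma cell_spec (hc : IsCubic G) (hcl : ClawFree G) (v : V) :
    UnitSet G (cell G v) ∧ v ∈ cell G v :=
  Classical.epsilon_spec (unit_ex G hc hcl v)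

lemma cell_eq (hc : IsCubic G) (hcl : ClawFree G) {v w : V} (h : w ∈ cell G v) :
    cell G w = cell G v :=
  unitset_unique G hc (cell_spec G hc hcl w).1 (cell_spec G hc hcl v).1
    (cell_spec G hc hcl w).2 h

lemma mem_cell_iff (hc : IsCubic G) (hcl : ClawFree G) {v w : V} :
    w ∈ cell G v ↔ cell G w = cell G v := by
  constructor
  · exact cell_eq G hc hcl
  · intro h; rw [← h]; exact (cell_spec G hc hcl w).2

def RealUnit (s : Finset V) : Prop := ∃ v, cell G v = s

lemma real_mem_eq (hc : IsCubic G) (hcl : ClawFree G) {s t : Finset V}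
    (hs : RealUnit G s) (ht : RealUnit G t) {y : V} (hys : y ∈ s) (hyt : y ∈ t) : s = t := by
  obtain ⟨v, rfl⟩ := hs
  obtain ⟨w, rfl⟩ := ht
  rw [← cell_eq G hc hcl hys, ← cell_eq G hc hcl hyt]

/-! ### The unit graph -/

/-- the graph of units -/
def UG : SimpleGraph (Finset V) where
  Adj s t := s ≠ t ∧ RealUnit G s ∧ RealUnit G t ∧ ∃ x ∈ s, ∃ y ∈ t, G.Adj x y
  symm := by
    constructor
    rintro s t ⟨hne, hs, ht, x, hx, y, hy, hxy⟩
    exact ⟨hne.symm, ht, hs, y, hy, x, hx, hxy.symm⟩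
  loopless := by constructor; rintro s ⟨hne, -⟩; exact hne rfl

/-- in any simple graph, a positive-length walk yields a neighbour of the target closer
to the source -/
lemma exists_closer {W : Type*} (Γ : SimpleGraph W) {r s : W} (p : Γ.Walk r s)
    (hp : 0 < p.length) : ∃ t, Γ.Adj t s ∧ Γ.edist r t + 1 ≤ p.length := by
  induction p with
  | nil => simp at hp
  | @cons r s' s h q ih =>
    by_cases hq : q.length = 0
    · have hss : s' = s := by
        cases q with
        | nil => rfl
        | cons h' q' => simp [SimpleGraph.Walk.length_cons] at hq
      subst hss
      refine ⟨r, h, ?_⟩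
      rw [Γ.edist_self]
      simp only [SimpleGraph.Walk.length_cons, zero_add]
      exact_mod_cast Nat.one_le_iff_ne_zero.mpr (by omega)
    · obtain ⟨t, ht, hle⟩ := ih (Nat.pos_of_ne_zero hq)
      refine ⟨t, ht, ?_⟩
      have h1 : Γ.edist r s' ≤ 1 := by
        rw [SimpleGraph.edist_eq_one_iff_adj.mpr h]
      have htri : Γ.edist r t ≤ Γ.edist r s' + Γ.edist s' t := Γ.edist_triangle
      have : Γ.edist r t + 1 ≤ Γ.edist s' t + 1 + 1 := by
        calc Γ.edist r t + 1 ≤ (Γ.edist r s' + Γ.edist s' t) + 1 := by gcongr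
          _ ≤ (1 + Γ.edist s' t) + 1 := by gcongr
          _ = Γ.edist s' t + 1 + 1 := by ring
      refine le_trans this ?_
      have hq1 : Γ.edist s' t + 1 ≤ (q.length : ℕ∞) := hle
      simp only [SimpleGraph.Walk.length_cons]
      push_cast
      exact add_le_add_left hq1 1

lemma exists_parent {W : Type*} (Γ : SimpleGraph W) {r s : W}
    (h1 : Γ.edist r s ≠ ⊤) (h2 : Γ.edist r s ≠ 0) :
    ∃ t, Γ.Adj t s ∧ Γ.edist r t + 1 = Γ.edist r s := by
  obtain ⟨p, hp⟩ := SimpleGraph.exists_walk_of_edist_ne_top h1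
  have hpos : 0 < p.length := by
    rcases Nat.eq_zero_or_pos p.length with h0 | h0
    · exfalso; apply h2; rw [← hp, h0]; rfl
    · exact h0
  obtain ⟨t, ht, hle⟩ := exists_closer Γ p hpos
  rw [hp] at hle
  refine ⟨t, ht, le_antisymm hle ?_⟩
  have h1' : Γ.edist t s = 1 := SimpleGraph.edist_eq_one_iff_adj.mpr ht
  calc Γ.edist r s ≤ Γ.edist r t + Γ.edist t s := Γ.edist_triangle
    _ = Γ.edist r t + 1 := by rw [h1']

def RootP (C : (UG G).ConnectedComponent) (s : Finset V) : Prop :=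
  (UG G).connectedComponentMk s = C ∧
    (DiaSet G s ∨ ∀ t, (UG G).connectedComponentMk t = C → ¬ DiaSet G t)

lemma root_ex (C : (UG G).ConnectedComponent) : ∃ s, RootP G C s := by
  obtain ⟨s0, hs0⟩ := C.exists_rep
  by_cases hd : ∃ d, (UG G).connectedComponentMk d = C ∧ DiaSet G d
  · obtain ⟨d, hd1, hd2⟩ := hd
    exact ⟨d, hd1, Or.inl hd2⟩
  · push_neg at hd
    exact ⟨s0, hs0, Or.inr hd⟩

noncomputable def rootC (C : (UG G).ConnectedComponent) : Finset V :=
  Classical.epsilon (RootP G C)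

lemma rootC_spec (C : (UG G).ConnectedComponent) : RootP G C (rootC G C) :=
  Classical.epsilon_spec (root_ex G C)

noncomputable def depE (s : Finset V) : ℕ∞ :=
  (UG G).edist (rootC G ((UG G).connectedComponentMk s)) s

noncomputable def depS (s : Finset V) : ℕ := (depE G s).toNat

lemma depE_ne_top (s : Finset V) : depE G s ≠ ⊤ := by
  have h := (rootC_spec G ((UG G).connectedComponentMk s)).1
  have : (UG G).Reachable (rootC G ((UG G).connectedComponentMk s)) s :=
    SimpleGraph.ConnectedComponent.exact h
  exact SimpleGraph.edist_ne_top_iff_reachable.mpr this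

noncomputable def parityB (s : Finset V) : Bool := decide (depS G s % 2 = 1)

def ParP (s t : Finset V) : Prop :=
  (UG G).Adj s t ∧ (depS G s ≠ 0 →
    (UG G).edist (rootC G ((UG G).connectedComponentMk s)) t + 1 = depE G s)

noncomputable def par (s : Finset V) : Finset V := Classical.epsilon (ParP G s)

/-- triangles always have a parent -/
lemma par_ex (hc : IsCubic G) (hcl : ClawFree G) {s : Finset V}
    (hr : RealUnit G s) (ht : TriSet G s) : ∃ t, ParP G s t := by
  by_cases h0 : depS G s = 0
  · obtain ⟨x, y, z, hT, rfl⟩ := ht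
    obtain ⟨e, hex', hey, hez, hxe, -⟩ := tri_nbrs G hc hT
    have hemem : e ∉ ({x, y, z} : Finset V) := by simp [hex', hey, hez]
    have hecell : e ∈ cell G e := (cell_spec G hc hcl e).2
    have hne : ({x, y, z} : Finset V) ≠ cell G e := by
      intro hh; rw [← hh] at hecell; exact hemem hecell
    refine ⟨cell G e, ⟨hne, hr, ⟨e, rfl⟩, x, by simp, e, hecell, hxe⟩, fun h => absurd h0 h⟩
  · have hne_top : (UG G).edist (rootC G ((UG G).connectedComponentMk s)) s ≠ ⊤ :=
      depE_ne_top G s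
    have hne0 : (UG G).edist (rootC G ((UG G).connectedComponentMk s)) s ≠ 0 := by
      intro hh
      apply h0
      unfold depS depE
      rw [hh]; rfl
    obtain ⟨t, hadj, heq⟩ := exists_parent (UG G) hne_top hne0
    exact ⟨t, hadj.symm, fun _ => heq⟩

lemma par_comp {s : Finset V} (h : (UG G).Adj s (par G s)) :
    (UG G).connectedComponentMk (par G s) = (UG G).connectedComponentMk s :=
  (SimpleGraph.ConnectedComponent.connectedComponentMk_eq_of_adj h).symm

lemma par_spec (hc : IsCubic G) (hcl : ClawFree G) {s : Finset V}
    (hr : RealUnit G s) (ht : TriSet G s) : ParP G s (par G s) :=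
  Classical.epsilon_spec (par_ex G hc hcl hr ht)

/-- a triangle and its parent have distinct depth parity -/
lemma par_parity (hc : IsCubic G) (hcl : ClawFree G) {s : Finset V}
    (hr : RealUnit G s) (ht : TriSet G s) :
    depS G (par G s) % 2 ≠ depS G s % 2 := by
  have hps := par_spec G hc hcl hr ht
  have hcomp := par_comp G hps.1
  have hne1 : depE G s ≠ ⊤ := depE_ne_top _ _
  have hne2 : depE G (par G s) ≠ ⊤ := depE_ne_top _ _
  have h1 : depE G (par G s) =
      (UG G).edist (rootC G ((UG G).connectedComponentMk s)) (par G s) := by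
    unfold depE; rw [hcomp]
  by_cases h0 : depS G s = 0
  · have hE : depE G s = 0 := by
      rcases (ENat.toNat_eq_zero).mp h0 with h | h
      · exact h
      · exact absurd h hne1
    have hroot : rootC G ((UG G).connectedComponentMk s) = s :=
      SimpleGraph.edist_eq_zero_iff.mp hE
    have hpar1 : depE G (par G s) = 1 := by
      rw [h1, hroot]
      exact SimpleGraph.edist_eq_one_iff_adj.mpr hps.1
    have : depS G (par G s) = 1 := by unfold depS; rw [hpar1]; rfl
    omega
  · have heq := hps.2 h0
    rw [← h1] at heq
    lift depE G (par G s) to ℕ using hne2 with m hm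
    have hdepS : depS G s = m + 1 := by
      unfold depS; unfold depE at heq ⊢; rw [← heq]; rfl
    have hdepP : depS G (par G s) = m := by unfold depS; rw [← hm]; rfl
    omega

section NE
variable [Nonempty V]

noncomputable def bv (s : Finset V) : V :=
  Classical.epsilon (fun x => x ∈ s ∧ ∃ y ∈ par G s, G.Adj x y)

lemma bv_spec (hc : IsCubic G) (hcl : ClawFree G) {s : Finset V}
    (hr : RealUnit G s) (ht : TriSet G s) :
    bv G s ∈ s ∧ ∃ y ∈ par G s, G.Adj (bv G s) y := by
  have hps := par_spec G hc hcl hr ht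
  obtain ⟨-, -, -, x, hx, y, hy, hxy⟩ := hps.1
  exact Classical.epsilon_spec (p := fun x => x ∈ s ∧ ∃ y ∈ par G s, G.Adj x y)
    ⟨x, hx, y, hy, hxy⟩

def Pointed (d : Finset V) : Prop :=
  ∃ s, RealUnit G s ∧ TriSet G s ∧ par G s = d

/-! ### choice of named vertices in units -/

noncomputable def diaP (s : Finset V) : V :=
  Classical.epsilon (fun p => ∃ q r t, IsDia G p q r t ∧ s = {p, q, r, t})
noncomputable def diaQ (s : Finset V) : V :=
  Classical.epsilon (fun q => ∃ r t, IsDia G (diaP G s) q r t ∧ s = {diaP G s, q, r, t})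
noncomputable def diaI1 (s : Finset V) : V :=
  Classical.epsilon (fun r => ∃ t, IsDia G (diaP G s) (diaQ G s) r t ∧
    s = {diaP G s, diaQ G s, r, t})
noncomputable def diaI2 (s : Finset V) : V :=
  Classical.epsilon (fun t => IsDia G (diaP G s) (diaQ G s) (diaI1 G s) t ∧
    s = {diaP G s, diaQ G s, diaI1 G s, t})

lemma dia_spec {s : Finset V} (h : DiaSet G s) :
    IsDia G (diaP G s) (diaQ G s) (diaI1 G s) (diaI2 G s) ∧
      s = {diaP G s, diaQ G s, diaI1 G s, diaI2 G s} := by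
  have h1 : ∃ q r t, IsDia G (diaP G s) q r t ∧ s = {diaP G s, q, r, t} :=
    Classical.epsilon_spec (p := fun p => ∃ q r t, IsDia G p q r t ∧ s = {p, q, r, t}) h
  have h2 : ∃ r t, IsDia G (diaP G s) (diaQ G s) r t ∧ s = {diaP G s, diaQ G s, r, t} :=
    Classical.epsilon_spec
      (p := fun q => ∃ r t, IsDia G (diaP G s) q r t ∧ s = {diaP G s, q, r, t}) h1
  have h3 : ∃ t, IsDia G (diaP G s) (diaQ G s) (diaI1 G s) t ∧
      s = {diaP G s, diaQ G s, diaI1 G s, t} :=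
    Classical.epsilon_spec
      (p := fun r => ∃ t, IsDia G (diaP G s) (diaQ G s) r t ∧
        s = {diaP G s, diaQ G s, r, t}) h2
  exact Classical.epsilon_spec
    (p := fun t => IsDia G (diaP G s) (diaQ G s) (diaI1 G s) t ∧
      s = {diaP G s, diaQ G s, diaI1 G s, t}) h3

noncomputable def k4a (s : Finset V) : V :=
  Classical.epsilon (fun a => ∃ b c d, IsK4 G a b c d ∧ s = {a, b, c, d})
noncomputable def k4b (s : Finset V) : V :=
  Classical.epsilon (fun b => ∃ c d, IsK4 G (k4a G s) b c d ∧ s = {k4a G s, b, c, d})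
noncomputable def k4c (s : Finset V) : V :=
  Classical.epsilon (fun c => ∃ d, IsK4 G (k4a G s) (k4b G s) c d ∧
    s = {k4a G s, k4b G s, c, d})
noncomputable def k4d (s : Finset V) : V :=
  Classical.epsilon (fun d => IsK4 G (k4a G s) (k4b G s) (k4c G s) d ∧
    s = {k4a G s, k4b G s, k4c G s, d})

lemma k4_spec {s : Finset V} (h : K4Set G s) :
    IsK4 G (k4a G s) (k4b G s) (k4c G s) (k4d G s) ∧
      s = {k4a G s, k4b G s, k4c G s, k4d G s} := by
  have h1 : ∃ b c d, IsK4 G (k4a G s) b c d ∧ s = {k4a G s, b, c, d} :=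
    Classical.epsilon_spec (p := fun a => ∃ b c d, IsK4 G a b c d ∧ s = {a, b, c, d}) h
  have h2 : ∃ c d, IsK4 G (k4a G s) (k4b G s) c d ∧ s = {k4a G s, k4b G s, c, d} :=
    Classical.epsilon_spec
      (p := fun b => ∃ c d, IsK4 G (k4a G s) b c d ∧ s = {k4a G s, b, c, d}) h1
  have h3 : ∃ d, IsK4 G (k4a G s) (k4b G s) (k4c G s) d ∧
      s = {k4a G s, k4b G s, k4c G s, d} :=
    Classical.epsilon_spec
      (p := fun c => ∃ d, IsK4 G (k4a G s) (k4b G s) c d ∧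
        s = {k4a G s, k4b G s, c, d}) h2
  exact Classical.epsilon_spec
    (p := fun d => IsK4 G (k4a G s) (k4b G s) (k4c G s) d ∧
      s = {k4a G s, k4b G s, k4c G s, d}) h3

/-! ### The colouring -/

noncomputable def Bcol (v : V) : Option Bool :=
  if TriSet G (cell G v) then
    (if v = bv G (cell G v) then some (parityB G (cell G v)) else none)
  else if DiaSet G (cell G v) then
    (if v = diaI2 G (cell G v) then
        (if Pointed G (cell G v) then some (parityB G (cell G v)) else some true)
     else if v = diaI1 G (cell G v) then
        (if Pointed G (cell G v) then none else some false)
     else none)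
  else
    (if v = k4c G (cell G v) then some false
     else if v = k4d G (cell G v) then some true
     else none)

/-- the graph induced on A-side vertices -/
def GA : SimpleGraph V where
  Adj u v := G.Adj u v ∧ Bcol G u = none ∧ Bcol G v = none
  symm := by constructor; rintro u v ⟨h, hu, hv⟩; exact ⟨h.symm, hv, hu⟩
  loopless := by constructor; rintro v ⟨h, -⟩; exact G.loopless.irrefl v h

noncomputable def baseC (C : (GA G).ConnectedComponent) : V :=
  Classical.epsilon (fun u => (GA G).connectedComponentMk u = C)

lemma baseC_spec (C : (GA G).ConnectedComponent) :
    (GA G).connectedComponentMk (baseC G C) = C := by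
  obtain ⟨u, hu⟩ := C.exists_rep
  exact Classical.epsilon_spec (p := fun u => (GA G).connectedComponentMk u = C) ⟨u, hu⟩

noncomputable def phi (v : V) : Prop :=
  Odd (((GA G).edist (baseC G ((GA G).connectedComponentMk v)) v).toNat)

/-! ### no odd closed walk in GA -/


/-! ### glue lemmas -/

lemma k4_adj_of_mem {a b c d u w : V} (h : IsK4 G a b c d)
    (hu : u ∈ ({a, b, c, d} : Finset V)) (hw : w ∈ ({a, b, c, d} : Finset V))
    (hne : u ≠ w) : G.Adj u w := by
  obtain ⟨h1, h2, h3, h4, h5, h6⟩ := h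
  simp only [Finset.mem_insert, Finset.mem_singleton] at hu hw
  rcases hu with rfl | rfl | rfl | rfl <;> rcases hw with rfl | rfl | rfl | rfl <;>
    first
      | exact absurd rfl hne
      | assumption
      | exact h1.symm
      | exact h2.symm
      | exact h3.symm
      | exact h4.symm
      | exact h5.symm
      | exact h6.symm

lemma dia_card {s : Finset V} (h : DiaSet G s) : s.card = 4 := by
  obtain ⟨p, q, r, t, ⟨hpq, hpqne, hpr, hpt, hqr, hqt, hrt⟩, rfl⟩ := h
  rw [Finset.card_insert_of_notMem (by simp [hpqne, hpr.ne, hpt.ne]),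
    Finset.card_insert_of_notMem (by simp [hqr.ne, hqt.ne]),
    Finset.card_insert_of_notMem (by simp [hrt.ne]), Finset.card_singleton]

lemma k4_card {s : Finset V} (h : K4Set G s) : s.card = 4 := by
  obtain ⟨a, b, c, d, ⟨h1, h2, h3, h4, h5, h6⟩, rfl⟩ := h
  rw [Finset.card_insert_of_notMem (by simp [h1.ne, h2.ne, h3.ne]),
    Finset.card_insert_of_notMem (by simp [h4.ne, h5.ne]),
    Finset.card_insert_of_notMem (by simp [h6.ne]), Finset.card_singleton]

lemma tri_card {s : Finset V} (h : TriSet G s) : s.card = 3 := by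
  obtain ⟨x, y, z, ⟨hxy, hxz, hyz, -⟩, rfl⟩ := h
  rw [Finset.card_insert_of_notMem (by simp [hxy.ne, hxz.ne]),
    Finset.card_insert_of_notMem (by simp [hyz.ne]), Finset.card_singleton]

lemma tri_not_dia {s : Finset V} (h1 : TriSet G s) (h2 : DiaSet G s) : False := by
  have := tri_card G h1; have := dia_card G h2; omega

lemma tri_not_k4 {s : Finset V} (h1 : TriSet G s) (h2 : K4Set G s) : False := by
  have := tri_card G h1; have := k4_card G h2; omega

lemma k4_not_dia {s : Finset V} (h1 : K4Set G s) (h2 : DiaSet G s) : False := by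
  obtain ⟨p, q, r, t, hd, hset⟩ := h2
  obtain ⟨a, b, c, d, hk, rfl⟩ := h1
  have hp : p ∈ ({a, b, c, d} : Finset V) := by rw [hset]; simp
  have hq : q ∈ ({a, b, c, d} : Finset V) := by rw [hset]; simp
  exact hd.1 (k4_adj_of_mem G hk hp hq hd.2.1)

lemma cell_of_mem (hc : IsCubic G) (hcl : ClawFree G) {s : Finset V}
    (hr : RealUnit G s) {y : V} (hy : y ∈ s) : cell G y = s := by
  obtain ⟨v, rfl⟩ := hr
  exact cell_eq G hc hcl hy

lemma not_mem_of_ne (hc : IsCubic G) (hcl : ClawFree G) {s t : Finset V}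
    (hr : RealUnit G s) (hrt : RealUnit G t) (hne : s ≠ t) {y : V} (hy : y ∈ s) :
    y ∉ t := fun hyt => hne (real_mem_eq G hc hcl hr hrt hy hyt)

lemma k4_nbrs_in (hc : IsCubic G) {s : Finset V} (hK : K4Set G s) {v : V} (hv : v ∈ s) :
    ∀ y, G.Adj v y → y ∈ s := by
  obtain ⟨a, b, c, d, h, rfl⟩ := hK
  obtain ⟨b', c', d', h', hset⟩ := k4_mem_first G h hv
  intro y hy
  rcases k4_nbrs G hc h' y hy with rfl | rfl | rfl <;> rw [hset] <;> simp

lemma unit_extUniq (hc : IsCubic G) {s : Finset V} (hU : UnitSet G s) {v : V} (hv : v ∈ s)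
    {y z : V} (hxy : G.Adj v y) (hxz : G.Adj v z)
    (hy : y ∉ s) (hz : z ∉ s) : y = z := by
  rcases hU with hK | hD | hT
  · exact absurd (k4_nbrs_in G hc hK hv y hxy) hy
  · obtain ⟨p, q, r, t, h, rfl⟩ := hD
    rcases dia_mem_first G h hv with ⟨q', r', t', h', hset⟩ | ⟨p', q', t', h', hset⟩
    · obtain ⟨e, -, -, -, -, -, hex⟩ := dia_nbrs_port G hc h'
      have hy' := hex y hxy
      have hz' := hex z hxz
      rw [hset] at hy hz
      rcases hy' with rfl | rfl | rfl
      · exact absurd (by simp) hy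
      · exact absurd (by simp) hy
      · rcases hz' with rfl | rfl | rfl
        · exact absurd (by simp) hz
        · exact absurd (by simp) hz
        · rfl
    · rcases dia_nbrs_int G hc h' y hxy with rfl | rfl | rfl <;>
        exact absurd (by rw [hset]; simp) hy
  · obtain ⟨x, y', z', h, rfl⟩ := hT
    obtain ⟨y'', z'', h', hset⟩ := tri_mem_first G h hv
    obtain ⟨e, -, -, -, -, hex⟩ := tri_nbrs G hc h'
    have hy' := hex y hxy
    have hz' := hex z hxz
    rw [hset] at hy hz
    rcases hy' with rfl | rfl | rfl
    · exact absurd (by simp) hy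
    · exact absurd (by simp) hy
    · rcases hz' with rfl | rfl | rfl
      · exact absurd (by simp) hz
      · exact absurd (by simp) hz
      · rfl

lemma parityB_ne {a b : Finset V} (h : depS G a % 2 ≠ depS G b % 2) :
    parityB G a ≠ parityB G b := by
  intro hh
  unfold parityB at hh
  rw [decide_eq_decide] at hh
  omega

lemma extUniq (hc : IsCubic G) (hcl : ClawFree G) {x y z : V}
    (hxy : G.Adj x y) (hxz : G.Adj x z)
    (hy : y ∉ cell G x) (hz : z ∉ cell G x) : y = z :=
  unit_extUniq G hc (cell_spec G hc hcl x).1 (cell_spec G hc hcl x).2 hxy hxz hy hz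

/-! ### B-side conflicts -/


lemma mem_of_eq4 {s : Finset V} {a b c d : V} (h : s = {a, b, c, d}) :
    a ∈ s ∧ b ∈ s ∧ c ∈ s ∧ d ∈ s := by
  rw [h]; refine ⟨by simp, by simp, by simp, by simp⟩

lemma dia_int_nbrs_in (hc : IsCubic G) {s : Finset V} (hD : DiaSet G s) {v : V}
    (hv : v = diaI1 G s ∨ v = diaI2 G s) : ∀ y, G.Adj v y → y ∈ s := by
  obtain ⟨h, hset⟩ := dia_spec G hD
  obtain ⟨m1, m2, m3, m4⟩ := mem_of_eq4 hset
  intro y hy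
  rcases hv with rfl | rfl
  · rcases dia_nbrs_int G hc h y hy with rfl | rfl | rfl <;> assumption
  · rcases dia_nbrs_int G hc (isDia_swap_ints G h) y hy with rfl | rfl | rfl <;> assumption

lemma par_real (hc : IsCubic G) (hcl : ClawFree G) {s : Finset V}
    (hr : RealUnit G s) (ht : TriSet G s) :
    RealUnit G (par G s) ∧ s ≠ par G s :=
  ⟨(par_spec G hc hcl hr ht).1.2.2.1, (par_spec G hc hcl hr ht).1.1⟩

lemma bv_mem (hc : IsCubic G) (hcl : ClawFree G) {s : Finset V}
    (hr : RealUnit G s) (ht : TriSet G s) : bv G s ∈ s :=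
  (bv_spec G hc hcl hr ht).1

lemma cell_bv (hc : IsCubic G) (hcl : ClawFree G) {s : Finset V}
    (hr : RealUnit G s) (ht : TriSet G s) : cell G (bv G s) = s :=
  cell_of_mem G hc hcl hr (bv_mem G hc hcl hr ht)

lemma point_unique (hc : IsCubic G) (hcl : ClawFree G) {s : Finset V}
    (hr : RealUnit G s) (ht : TriSet G s) {w : V}
    (hw : G.Adj (bv G s) w) (hwout : w ∉ s) : w ∈ par G s := by
  obtain ⟨hmem, y, hy, hadj⟩ := bv_spec G hc hcl hr ht
  have hyout : y ∉ s :=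
    not_mem_of_ne G hc hcl (par_real G hc hcl hr ht).1 hr
      (Ne.symm (par_real G hc hcl hr ht).2) hy
  have : w = y := by
    have hcell : cell G (bv G s) = s := cell_bv G hc hcl hr ht
    refine extUniq G hc hcl hw hadj ?_ ?_ <;> rw [hcell] <;> assumption
  rwa [this]

lemma Bcol_eval_tri {v : V} (hT : TriSet G (cell G v)) :
    Bcol G v = if v = bv G (cell G v) then some (parityB G (cell G v)) else none := by
  unfold Bcol; rw [if_pos hT]

lemma Bcol_eval_dia {v : V} (hD : DiaSet G (cell G v)) :
    Bcol G v = (if v = diaI2 G (cell G v) then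
        (if Pointed G (cell G v) then some (parityB G (cell G v)) else some true)
      else if v = diaI1 G (cell G v) then
        (if Pointed G (cell G v) then none else some false)
      else none) := by
  unfold Bcol; rw [if_neg (fun h => tri_not_dia G h hD), if_pos hD]

lemma Bcol_eval_k4 {v : V} (hK : K4Set G (cell G v)) :
    Bcol G v = (if v = k4c G (cell G v) then some false
      else if v = k4d G (cell G v) then some true else none) := by
  unfold Bcol; rw [if_neg (fun h => tri_not_k4 G h hK), if_neg (fun h => k4_not_dia G hK h)]

lemma Bcol_some_tri {v : V} {i : Bool} (hT : TriSet G (cell G v)) (h : Bcol G v = some i) :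
    v = bv G (cell G v) ∧ i = parityB G (cell G v) := by
  rw [Bcol_eval_tri G hT] at h
  by_cases h1 : v = bv G (cell G v)
  · rw [if_pos h1] at h
    exact ⟨h1, (Option.some.inj h).symm⟩
  · rw [if_neg h1] at h
    exact absurd h (by simp)

lemma Bcol_some_dia {v : V} {i : Bool} (hD : DiaSet G (cell G v)) (h : Bcol G v = some i) :
    (v = diaI2 G (cell G v) ∧ (Pointed G (cell G v) → i = parityB G (cell G v)) ∧
      (¬ Pointed G (cell G v) → i = true)) ∨
    (v = diaI1 G (cell G v) ∧ ¬ Pointed G (cell G v) ∧ i = false) := by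
  rw [Bcol_eval_dia G hD] at h
  by_cases h1 : v = diaI2 G (cell G v)
  · rw [if_pos h1] at h
    by_cases hp : Pointed G (cell G v)
    · rw [if_pos hp] at h
      exact Or.inl ⟨h1, fun _ => (Option.some.inj h).symm, fun hn => absurd hp hn⟩
    · rw [if_neg hp] at h
      exact Or.inl ⟨h1, fun hq => absurd hq hp, fun _ => (Option.some.inj h).symm⟩
  · rw [if_neg h1] at h
    by_cases h2 : v = diaI1 G (cell G v)
    · rw [if_pos h2] at h
      by_cases hp : Pointed G (cell G v)
      · rw [if_pos hp] at h
        exact absurd h (by simp)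
      · rw [if_neg hp] at h
        exact Or.inr ⟨h2, hp, (Option.some.inj h).symm⟩
    · rw [if_neg h2] at h
      exact absurd h (by simp)

lemma Bcol_some_k4 {v : V} {i : Bool} (hK : K4Set G (cell G v)) (h : Bcol G v = some i) :
    (v = k4c G (cell G v) ∧ i = false) ∨ (v = k4d G (cell G v) ∧ i = true) := by
  rw [Bcol_eval_k4 G hK] at h
  by_cases h1 : v = k4c G (cell G v)
  · rw [if_pos h1] at h
    exact Or.inl ⟨h1, (Option.some.inj h).symm⟩
  · rw [if_neg h1] at h
    by_cases h2 : v = k4d G (cell G v)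
    · rw [if_pos h2] at h
      exact Or.inr ⟨h2, (Option.some.inj h).symm⟩
    · rw [if_neg h2] at h
      exact absurd h (by simp)


lemma Bcol_none_k4 {v : V} (hK : K4Set G (cell G v)) (h : Bcol G v = none) :
    v ≠ k4c G (cell G v) ∧ v ≠ k4d G (cell G v) := by
  rw [Bcol_eval_k4 G hK] at h
  constructor
  · intro hh; rw [if_pos hh] at h; exact absurd h (by simp)
  · intro hh
    by_cases h1 : v = k4c G (cell G v)
    · rw [if_pos h1] at h; exact absurd h (by simp)
    · rw [if_neg h1, if_pos hh] at h; exact absurd h (by simp)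

lemma Bcol_bv (hc : IsCubic G) (hcl : ClawFree G) {s : Finset V}
    (hr : RealUnit G s) (hT : TriSet G s) : Bcol G (bv G s) = some (parityB G s) := by
  have hcb := cell_bv G hc hcl hr hT
  have hT' : TriSet G (cell G (bv G s)) := by rw [hcb]; exact hT
  rw [Bcol_eval_tri G hT', hcb, if_pos rfl]

lemma Bcol_I2_ne (hc : IsCubic G) (hcl : ClawFree G) {s : Finset V}
    (hr : RealUnit G s) (hD : DiaSet G s) : Bcol G (diaI2 G s) ≠ none := by
  have hm : diaI2 G s ∈ s := (mem_of_eq4 (dia_spec G hD).2).2.2.2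
  have hcell : cell G (diaI2 G s) = s := cell_of_mem G hc hcl hr hm
  have hD' : DiaSet G (cell G (diaI2 G s)) := by rw [hcell]; exact hD
  rw [Bcol_eval_dia G hD', hcell, if_pos rfl]
  split_ifs <;> simp

lemma intra_core (hc : IsCubic G) (hcl : ClawFree G) {x y z : V}
    (hx : Bcol G x = none) (hy : Bcol G y = none) (hz : Bcol G z = none)
    (hxy : G.Adj x y) (hxz : G.Adj x z) (hyz : y ≠ z)
    (huy : cell G y = cell G x) (huz : cell G z = cell G x) :
    ∃ w, (w = y ∨ w = z) ∧ ∀ a, Bcol G a = none → G.Adj w a → a = x := by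
  have hxmem : x ∈ cell G x := (cell_spec G hc hcl x).2
  have hymem : y ∈ cell G x := (mem_cell_iff G hc hcl).mpr huy
  have hzmem : z ∈ cell G x := (mem_cell_iff G hc hcl).mpr huz
  have hreal : RealUnit G (cell G x) := ⟨x, rfl⟩
  rcases (cell_spec G hc hcl x).1 with hK | hD | hT
  · -- K4: impossible, three distinct A-vertices
    exfalso
    have hKy : K4Set G (cell G y) := by rw [huy]; exact hK
    have hKz : K4Set G (cell G z) := by rw [huz]; exact hK
    have hx' := Bcol_none_k4 G hK hx
    have hy' := Bcol_none_k4 G hKy hy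
    have hz' := Bcol_none_k4 G hKz hz
    rw [huy] at hy'
    rw [huz] at hz'
    obtain ⟨hk, hset⟩ := k4_spec G hK
    have hmem4 : ∀ w, w ∈ cell G x →
        w = k4a G (cell G x) ∨ w = k4b G (cell G x) ∨
        w = k4c G (cell G x) ∨ w = k4d G (cell G x) := by
      intro w hw
      rw [hset] at hw
      simpa using hw
    have hx2 : x = k4a G (cell G x) ∨ x = k4b G (cell G x) := by
      rcases hmem4 x hxmem with h | h | h | h
      · exact Or.inl h
      · exact Or.inr h
      · exact absurd h hx'.1
      · exact absurd h hx'.2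
    have hy2 : y = k4a G (cell G x) ∨ y = k4b G (cell G x) := by
      rcases hmem4 y hymem with h | h | h | h
      · exact Or.inl h
      · exact Or.inr h
      · exact absurd h hy'.1
      · exact absurd h hy'.2
    have hz2 : z = k4a G (cell G x) ∨ z = k4b G (cell G x) := by
      rcases hmem4 z hzmem with h | h | h | h
      · exact Or.inl h
      · exact Or.inr h
      · exact absurd h hz'.1
      · exact absurd h hz'.2
    rcases hx2 with hx1 | hx1 <;> rcases hy2 with hy1 | hy1 <;> rcases hz2 with hz1 | hz1 <;>
      first
        | exact hxy.ne (hx1.trans hy1.symm)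
        | exact hxz.ne (hx1.trans hz1.symm)
        | exact hyz (hy1.trans hz1.symm)
  · -- diamond case
    obtain ⟨hdia, hset⟩ := dia_spec G hD
    obtain ⟨hpq, hpqne, hpr, hpt, hqr, hqt, hrt⟩ := hdia
    have hmem4 : ∀ w, w ∈ cell G x →
        w = diaP G (cell G x) ∨ w = diaQ G (cell G x) ∨
        w = diaI1 G (cell G x) ∨ w = diaI2 G (cell G x) := by
      intro w hw
      rw [hset] at hw
      simpa using hw
    have hI2ne : ∀ w, Bcol G w = none → w ≠ diaI2 G (cell G x) := by
      intro w hw hh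
      rw [hh] at hw
      exact Bcol_I2_ne G hc hcl hreal hD hw
    have hx3 : x = diaP G (cell G x) ∨ x = diaQ G (cell G x) ∨ x = diaI1 G (cell G x) := by
      rcases hmem4 x hxmem with h | h | h | h
      · exact Or.inl h
      · exact Or.inr (Or.inl h)
      · exact Or.inr (Or.inr h)
      · exact absurd h (hI2ne x hx)
    have hy3 : y = diaP G (cell G x) ∨ y = diaQ G (cell G x) ∨ y = diaI1 G (cell G x) := by
      rcases hmem4 y hymem with h | h | h | h
      · exact Or.inl h
      · exact Or.inr (Or.inl h)
      · exact Or.inr (Or.inr h)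
      · exact absurd h (hI2ne y hy)
    have hz3 : z = diaP G (cell G x) ∨ z = diaQ G (cell G x) ∨ z = diaI1 G (cell G x) := by
      rcases hmem4 z hzmem with h | h | h | h
      · exact Or.inl h
      · exact Or.inr (Or.inl h)
      · exact Or.inr (Or.inr h)
      · exact absurd h (hI2ne z hz)
    -- x must be the A-internal, y z the two ports
    have hxI1 : x = diaI1 G (cell G x) := by
      rcases hx3 with h | h | h
      · -- x = P : its neighbours y z within the unit are I1 only (I2 excluded)
        exfalso
        obtain ⟨e, hep, heq, her, het, hpe, hex⟩ :=
          dia_nbrs_port G hc ⟨hpq, hpqne, hpr, hpt, hqr, hqt, hrt⟩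
        have hy4 : y = diaI1 G (cell G x) := by
          rcases hex y (h ▸ hxy) with h' | h' | h'
          · exact h'
          · exact absurd h' (hI2ne y hy)
          · exfalso
            rcases hy3 with h'' | h'' | h''
            · rw [h''] at h'; exact hep h'.symm
            · rw [h''] at h'; exact heq h'.symm
            · rw [h''] at h'; exact her h'.symm
        have hz4 : z = diaI1 G (cell G x) := by
          rcases hex z (h ▸ hxz) with h' | h' | h'
          · exact h'
          · exact absurd h' (hI2ne z hz)
          · exfalso
            rcases hz3 with h'' | h'' | h''
            · rw [h''] at h'; exact hep h'.symm
            · rw [h''] at h'; exact heq h'.symm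
            · rw [h''] at h'; exact her h'.symm
        exact hyz (hy4.trans hz4.symm)
      · exfalso
        obtain ⟨e, hep, heq, her, het, hpe, hex⟩ :=
          dia_nbrs_port G hc (isDia_swap_ports G ⟨hpq, hpqne, hpr, hpt, hqr, hqt, hrt⟩)
        have hy4 : y = diaI1 G (cell G x) := by
          rcases hex y (h ▸ hxy) with h' | h' | h'
          · exact h'
          · exact absurd h' (hI2ne y hy)
          · exfalso
            rcases hy3 with h'' | h'' | h''
            · rw [h''] at h'; exact heq h'.symm
            · rw [h''] at h'; exact hep h'.symm
            · rw [h''] at h'; exact her h'.symm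
        have hz4 : z = diaI1 G (cell G x) := by
          rcases hex z (h ▸ hxz) with h' | h' | h'
          · exact h'
          · exact absurd h' (hI2ne z hz)
          · exfalso
            rcases hz3 with h'' | h'' | h''
            · rw [h''] at h'; exact heq h'.symm
            · rw [h''] at h'; exact hep h'.symm
            · rw [h''] at h'; exact her h'.symm
        exact hyz (hy4.trans hz4.symm)
      · exact h
    -- x = I1 : since Bcol x = none, the diamond is pointed
    have hpted : Pointed G (cell G x) := by
      by_contra hnp
      have hxne2 := hI2ne x hx
      rw [Bcol_eval_dia G hD, if_neg hxne2, if_pos hxI1, if_neg hnp] at hx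
      exact absurd hx (by simp)
    -- the pointer triangle
    obtain ⟨t, hrt', hTt, hpart⟩ := hpted
    obtain ⟨hbmem, yb, hyb, hbadj⟩ := bv_spec G hc hcl hrt' hTt
    rw [hpart] at hyb
    have htne : t ≠ cell G x := by
      intro hh
      rw [hh] at hTt
      exact tri_not_dia G hTt hD
    have hbout : bv G t ∉ cell G x :=
      not_mem_of_ne G hc hcl hrt' hreal htne hbmem
    -- yb is a port
    have hybports : yb = diaP G (cell G x) ∨ yb = diaQ G (cell G x) := by
      rcases hmem4 yb hyb with h | h | h | h
      · exact Or.inl h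
      · exact Or.inr h
      · exact absurd (dia_int_nbrs_in G hc hD (Or.inl h) (bv G t) hbadj.symm) hbout
      · exact absurd (dia_int_nbrs_in G hc hD (Or.inr h) (bv G t) hbadj.symm) hbout
    -- y and z are the two ports
    have hy5 : y = diaP G (cell G x) ∨ y = diaQ G (cell G x) := by
      rcases hy3 with h | h | h
      · exact Or.inl h
      · exact Or.inr h
      · exact absurd (hxI1.trans h.symm).symm hxy.ne'
    have hz5 : z = diaP G (cell G x) ∨ z = diaQ G (cell G x) := by
      rcases hz3 with h | h | h
      · exact Or.inl h
      · exact Or.inr h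
      · exact absurd (hxI1.trans h.symm).symm hxz.ne'
    have hwyz : yb = y ∨ yb = z := by
      rcases hybports with h | h
      · rcases hy5 with h' | h'
        · exact Or.inl (h.trans h'.symm)
        · rcases hz5 with h'' | h''
          · exact Or.inr (h.trans h''.symm)
          · exact absurd (h'.trans h''.symm) hyz
      · rcases hy5 with h' | h'
        · rcases hz5 with h'' | h''
          · exact absurd (h'.trans h''.symm) hyz
          · exact Or.inr (h.trans h''.symm)
        · exact Or.inl (h.trans h'.symm)
    refine ⟨yb, hwyz, ?_⟩
    intro a ha hadj'
    -- neighbours of the port yb : I1, I2 and the external one = bv t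
    have hBb : Bcol G (bv G t) ≠ none := by
      rw [Bcol_bv G hc hcl hrt' hTt]; simp
    rcases hybports with hybp | hybp
    · obtain ⟨e, hep, heq, her, het, hpe, hex⟩ :=
        dia_nbrs_port G hc ⟨hpq, hpqne, hpr, hpt, hqr, hqt, hrt⟩
      have hbe : bv G t = e := by
        rcases hex (bv G t) (hybp ▸ hbadj).symm with h' | h' | h'
        · exact absurd (by rw [h']; exact (mem_of_eq4 hset).2.2.1) hbout
        · exact absurd (by rw [h']; exact (mem_of_eq4 hset).2.2.2) hbout
        · exact h'
      rcases hex a (hybp ▸ hadj') with h' | h' | h'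
      · exact h'.trans hxI1.symm
      · exact absurd h' (hI2ne a ha)
      · exfalso; rw [← hbe] at h'; rw [h'] at ha; exact hBb ha
    · obtain ⟨e, hep, heq, her, het, hpe, hex⟩ :=
        dia_nbrs_port G hc (isDia_swap_ports G ⟨hpq, hpqne, hpr, hpt, hqr, hqt, hrt⟩)
      have hbe : bv G t = e := by
        rcases hex (bv G t) (hybp ▸ hbadj).symm with h' | h' | h'
        · exact absurd (by rw [h']; exact (mem_of_eq4 hset).2.2.1) hbout
        · exact absurd (by rw [h']; exact (mem_of_eq4 hset).2.2.2) hbout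
        · exact h'
      rcases hex a (hybp ▸ hadj') with h' | h' | h'
      · exact h'.trans hxI1.symm
      · exact absurd h' (hI2ne a ha)
      · exfalso; rw [← hbe] at h'; rw [h'] at ha; exact hBb ha
  · -- triangle case : impossible, three distinct A vertices in a triangle
    exfalso
    have hT2 := hT
    obtain ⟨x', y', z', hT', hset⟩ := hT
    have hcard : (cell G x).card = 3 := tri_card G hT2
    have hsub : ({x, y, z} : Finset V) ⊆ cell G x := by
      intro w hw
      simp only [Finset.mem_insert, Finset.mem_singleton] at hw
      rcases hw with rfl | rfl | rfl <;> assumption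
    have hxyz_card : ({x, y, z} : Finset V).card = 3 := by
      rw [Finset.card_insert_of_notMem (by simp [hxy.ne, hxz.ne]),
        Finset.card_insert_of_notMem (by simp [hyz]), Finset.card_singleton]
    have hseq : cell G x = ({x, y, z} : Finset V) :=
      (Finset.eq_of_subset_of_card_le hsub (by omega)).symm
    have hbvmem : bv G (cell G x) ∈ cell G x := bv_mem G hc hcl hreal hT2
    have hBb : Bcol G (bv G (cell G x)) ≠ none := by
      rw [Bcol_bv G hc hcl hreal hT2]; simp
    have hbvmem' := (Finset.ext_iff.mp hseq (bv G (cell G x))).mp hbvmem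
    simp only [Finset.mem_insert, Finset.mem_singleton] at hbvmem'
    rcases hbvmem' with h | h | h
    · exact hBb (by rw [h]; exact hx)
    · exact hBb (by rw [h]; exact hy)
    · exact hBb (by rw [h]; exact hz)

lemma noOdd (hc : IsCubic G) (hcl : ClawFree G) :
    ∀ (u : V) (w : (GA G).Walk u u), ¬ Odd w.length := by
  suffices hmain : ∀ n, Odd n → ∀ f : ℕ → V,
      (∀ i, (GA G).Adj (f i) (f (i + 1))) → (∀ i, f (i + n) = f i) → False by
    intro u w hodd
    have hn0 : w.length ≠ 0 := by
      intro h; rw [h, Nat.odd_iff] at hodd; omega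
    apply hmain w.length hodd (fun i => w.getVert (i % w.length))
    · intro i
      have hlt : i % w.length < w.length := Nat.mod_lt _ (Nat.pos_of_ne_zero hn0)
      by_cases hend : i % w.length + 1 = w.length
      · have h1 : (i + 1) % w.length = 0 := by
          rw [← Nat.mod_add_mod, hend, Nat.mod_self]
        simp only [h1]
        have hadj := w.adj_getVert_succ hlt
        rw [hend, w.getVert_length] at hadj
        rw [w.getVert_zero]
        exact hadj
      · have h1 : (i + 1) % w.length = i % w.length + 1 := by
          rw [← Nat.mod_add_mod, Nat.mod_eq_of_lt (by omega)]
        simp only [h1]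
        exact w.adj_getVert_succ hlt
    · intro i
      simp only [Nat.add_mod_right]
  intro n
  induction n using Nat.strong_induction_on with
  | _ n ih =>
    intro hodd f hadj hper
    have hn0 : n ≠ 0 := by intro h; rw [h, Nat.odd_iff] at hodd; omega
    by_cases h1 : n = 1
    · subst h1
      have h := hadj 0
      have hf : f 1 = f 0 := by simpa using hper 0
      rw [hf] at h
      exact (GA G).loopless.irrefl _ h
    have hodd' := Nat.odd_iff.mp hodd
    have hn3 : 3 ≤ n := by omega
    by_cases hb : ∃ i, f (i + 2) = f i
    · obtain ⟨i0, hi0⟩ := hb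
      have hmpos : 0 < n - 2 := by omega
      have hmodd : Odd (n - 2) := by rw [Nat.odd_iff]; omega
      apply ih (n - 2) (by omega) hmodd (fun j => f ((j % (n - 2)) + i0 + 2))
      · intro j
        have hjlt : j % (n - 2) < n - 2 := Nat.mod_lt _ hmpos
        by_cases hend : j % (n - 2) + 1 = n - 2
        · have hj1 : (j + 1) % (n - 2) = 0 := by
            rw [← Nat.mod_add_mod, hend, Nat.mod_self]
          simp only [hj1, zero_add]
          have he1 : f (i0 + 2) = f (n + i0) := by
            rw [hi0, ← hper i0]
            congr 1
            omega
          have he2 : j % (n - 2) + i0 + 2 = n + i0 - 1 := by omega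
          rw [he1, he2]
          have hadj' := hadj (n + i0 - 1)
          rw [show n + i0 - 1 + 1 = n + i0 by omega] at hadj'
          exact hadj'
        · have hj1 : (j + 1) % (n - 2) = j % (n - 2) + 1 := by
            rw [← Nat.mod_add_mod, Nat.mod_eq_of_lt (by omega)]
          simp only [hj1]
          rw [show j % (n - 2) + 1 + i0 + 2 = (j % (n - 2) + i0 + 2) + 1 by omega]
          exact hadj _
      · intro j
        simp only [Nat.add_mod_right]
    · push_neg at hb
      have halt : ∀ i, (cell G (f (i + 1)) = cell G (f (i + 2))) ↔
          ¬ (cell G (f i) = cell G (f (i + 1))) := by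
        intro i
        have hxy : (GA G).Adj (f (i + 1)) (f i) := (hadj i).symm
        have hxz : (GA G).Adj (f (i + 1)) (f (i + 2)) := hadj (i + 1)
        have hyz : f i ≠ f (i + 2) := fun hh => hb i hh.symm
        constructor
        · intro hTi1 hTi
          obtain ⟨w', hw'or, hprop⟩ := intra_core G hc hcl hxy.2.1 hxy.2.2 hxz.2.2
            hxy.1 hxz.1 hyz hTi hTi1.symm
          rcases hw'or with rfl | rfl
          · have hprev := hadj (i + n - 1)
            rw [show i + n - 1 + 1 = i + n by omega, hper i] at hprev
            have heq := hprop (f (i + n - 1)) hprev.2.1 hprev.1.symm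
            apply hb (i + n - 1)
            rw [show i + n - 1 + 2 = (i + 1) + n by omega, hper (i + 1), heq]
          · have hnext := hadj (i + 2)
            have heq := hprop (f (i + 3)) hnext.2.2 hnext.1
            exact hb (i + 1) (by rw [show i + 1 + 2 = i + 3 by omega, heq])
        · intro hnTi
          by_contra hnTi1
          have hyc : f i ∉ cell G (f (i + 1)) := fun hmem =>
            hnTi (cell_eq G hc hcl hmem)
          have hzc : f (i + 2) ∉ cell G (f (i + 1)) := fun hmem =>
            hnTi1 (cell_eq G hc hcl hmem).symm
          exact hyz (extUniq G hc hcl hxy.1 hxz.1 hyc hzc)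
      have hstep : ∀ i, (cell G (f i) = cell G (f (i + 1))) ↔
          ((cell G (f 0) = cell G (f 1)) ↔ Even i) := by
        intro i
        induction i with
        | zero => simp
        | succ k ihk =>
          rw [halt k, ihk, Nat.even_add_one]
          tauto
      have hn := hstep n
      have hfn0 : f n = f 0 := by simpa using hper 0
      have hfn1 : f (n + 1) = f 1 := by
        have := hper 1
        rw [show 1 + n = n + 1 by omega] at this
        exact this
      rw [hfn0, hfn1] at hn
      have hne : ¬ Even n := by rw [Nat.even_iff]; omega
      tauto

lemma phi_proper (hc : IsCubic G) (hcl : ClawFree G) {u v : V} (h : (GA G).Adj u v) :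
    phi G u ↔ ¬ phi G v := by
  have hcomp : (GA G).connectedComponentMk u = (GA G).connectedComponentMk v :=
    SimpleGraph.ConnectedComponent.connectedComponentMk_eq_of_adj h
  set r := baseC G ((GA G).connectedComponentMk u) with hr
  have hru : (GA G).Reachable r u :=
    SimpleGraph.ConnectedComponent.exact (baseC_spec G _)
  have hrv : (GA G).Reachable r v := by
    have hb := baseC_spec G ((GA G).connectedComponentMk u)
    exact SimpleGraph.ConnectedComponent.exact (by rw [hr]; exact hb.trans hcomp)
  obtain ⟨p, hp⟩ := hru.exists_walk_length_eq_edist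
  obtain ⟨q, hq⟩ := hrv.exists_walk_length_eq_edist
  have hdu : ((GA G).edist r u).toNat = p.length := by rw [← hp]; simp
  have hdv : ((GA G).edist r v).toNat = q.length := by rw [← hq]; simp
  have hW := noOdd G hc hcl r (p.append (SimpleGraph.Walk.cons h q.reverse))
  rw [SimpleGraph.Walk.length_append, SimpleGraph.Walk.length_cons,
    SimpleGraph.Walk.length_reverse] at hW
  rw [Nat.odd_iff] at hW
  push_neg at hW
  unfold phi
  rw [← hcomp, ← hr, hdu, hdv, Nat.odd_iff, Nat.odd_iff]
  omega

lemma conflict_k4side (hc : IsCubic G) (hcl : ClawFree G) {u v : V} {i : Bool}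
    (hu : Bcol G u = some i) (hv : Bcol G v = some i) (hne : u ≠ v)
    (hK : K4Set G (cell G u))
    (h : G.Adj u v ∨ ∃ w, G.Adj u w ∧ G.Adj w v) : False := by
  have humem := (cell_spec G hc hcl u).2
  have hvin : v ∈ cell G u := by
    rcases h with h | ⟨w, h1, h2⟩
    · exact k4_nbrs_in G hc hK humem v h
    · exact k4_nbrs_in G hc hK (k4_nbrs_in G hc hK humem w h1) v h2
  have hcv : cell G v = cell G u := cell_of_mem G hc hcl ⟨u, rfl⟩ hvin
  have hKv : K4Set G (cell G v) := by rw [hcv]; exact hK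
  rcases Bcol_some_k4 G hK hu with ⟨hu1, hu2⟩ | ⟨hu1, hu2⟩ <;>
    rcases Bcol_some_k4 G hKv hv with ⟨hv1, hv2⟩ | ⟨hv1, hv2⟩ <;> rw [hcv] at hv1
  · exact hne (hu1.trans hv1.symm)
  · rw [hu2] at hv2; exact absurd hv2 (by decide)
  · rw [hu2] at hv2; exact absurd hv2 (by decide)
  · exact hne (hu1.trans hv1.symm)

lemma conflict_diaside (hc : IsCubic G) (hcl : ClawFree G) {u v : V} {i : Bool}
    (hu : Bcol G u = some i) (hv : Bcol G v = some i) (hne : u ≠ v)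
    (hD : DiaSet G (cell G u))
    (h : G.Adj u v ∨ ∃ w, G.Adj u w ∧ G.Adj w v) : False := by
  have humem := (cell_spec G hc hcl u).2
  have hucase := Bcol_some_dia G hD hu
  have hint : u = diaI1 G (cell G u) ∨ u = diaI2 G (cell G u) := by
    rcases hucase with ⟨h1, -⟩ | ⟨h1, -⟩
    · exact Or.inr h1
    · exact Or.inl h1
  have hin : ∀ y, G.Adj u y → y ∈ cell G u := by
    intro y hy
    have := dia_int_nbrs_in G hc hD hint y hy
    exact this
  -- either v is in the same unit, or there is a common neighbour w in cell u with v outside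
  have hsplit : v ∈ cell G u ∨ ∃ w, w ∈ cell G u ∧ G.Adj w v ∧ v ∉ cell G u := by
    rcases h with h | ⟨w, h1, h2⟩
    · exact Or.inl (hin v h)
    · by_cases hvc : v ∈ cell G u
      · exact Or.inl hvc
      · exact Or.inr ⟨w, hin w h1, h2, hvc⟩
  rcases hsplit with hvin | ⟨w, hwin, hwv, hvout⟩
  · have hcv : cell G v = cell G u := cell_of_mem G hc hcl ⟨u, rfl⟩ hvin
    have hDv : DiaSet G (cell G v) := by rw [hcv]; exact hD
    have hvcase := Bcol_some_dia G hDv hv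
    rw [hcv] at hvcase
    rcases hucase with ⟨hu1, hu2, hu3⟩ | ⟨hu1, hu2, hu3⟩ <;>
      rcases hvcase with ⟨hv1, hv2, hv3⟩ | ⟨hv1, hv2, hv3⟩
    · exact hne (hu1.trans hv1.symm)
    · have hit : i = true := hu3 hv2
      rw [hv3] at hit
      exact absurd hit (by decide)
    · have hit : i = true := hv3 hu2
      rw [hu3] at hit
      exact absurd hit (by decide)
    · exact hne (hu1.trans hv1.symm)
  · -- v is outside : classify v's unit
    have hcune : cell G u ≠ cell G v := by
      intro hh; rw [hh] at hvout; exact hvout (cell_spec G hc hcl v).2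
    have hwout : w ∉ cell G v :=
      not_mem_of_ne G hc hcl ⟨u, rfl⟩ ⟨v, rfl⟩ hcune hwin
    rcases (cell_spec G hc hcl v).1 with hKv | hDv | hTv
    · exact hwout (k4_nbrs_in G hc hKv (cell_spec G hc hcl v).2 w hwv.symm)
    · have hvint : v = diaI1 G (cell G v) ∨ v = diaI2 G (cell G v) := by
        rcases Bcol_some_dia G hDv hv with ⟨h1, -⟩ | ⟨h1, -⟩
        · exact Or.inr h1
        · exact Or.inl h1
      exact hwout (dia_int_nbrs_in G hc hDv hvint w hwv.symm)
    · obtain ⟨hv1, hv2⟩ := Bcol_some_tri G hTv hv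
      have hwpar : w ∈ par G (cell G v) := by
        refine point_unique G hc hcl ⟨v, rfl⟩ hTv ?_ hwout
        rw [← hv1]; exact hwv.symm
      have hpareq : par G (cell G v) = cell G u :=
        real_mem_eq G hc hcl (par_real G hc hcl ⟨v, rfl⟩ hTv).1 ⟨u, rfl⟩ hwpar hwin
      have hpt : Pointed G (cell G u) := ⟨cell G v, ⟨v, rfl⟩, hTv, hpareq⟩
      have hiu : i = parityB G (cell G u) := by
        rcases hucase with ⟨-, hu2, -⟩ | ⟨-, hu2, -⟩
        · exact hu2 hpt
        · exact absurd hpt hu2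
      have hpar := par_parity G hc hcl ⟨v, rfl⟩ hTv
      rw [hpareq] at hpar
      exact parityB_ne G hpar (by rw [← hiu, ← hv2])

lemma conflict_tritri (hc : IsCubic G) (hcl : ClawFree G) {u v : V} {i : Bool}
    (hu : Bcol G u = some i) (hv : Bcol G v = some i) (hne : u ≠ v)
    (hTu : TriSet G (cell G u)) (hTv : TriSet G (cell G v))
    (h : G.Adj u v ∨ ∃ w, G.Adj u w ∧ G.Adj w v) : False := by
  obtain ⟨hu1, hu2⟩ := Bcol_some_tri G hTu hu
  obtain ⟨hv1, hv2⟩ := Bcol_some_tri G hTv hv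
  by_cases hceq : cell G u = cell G v
  · exact hne (by rw [hu1, hv1, hceq])
  have hparity : par G (cell G u) = cell G v → False := by
    intro hpareq
    have hpar := par_parity G hc hcl ⟨u, rfl⟩ hTu
    rw [hpareq] at hpar
    exact parityB_ne G hpar (by rw [← hu2, ← hv2])
  have hparity' : par G (cell G v) = cell G u → False := by
    intro hpareq
    have hpar := par_parity G hc hcl ⟨v, rfl⟩ hTv
    rw [hpareq] at hpar
    exact parityB_ne G hpar (by rw [← hv2, ← hu2])
  rcases h with h | ⟨w, h1, h2⟩
  · have hvout : v ∉ cell G u :=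
      not_mem_of_ne G hc hcl ⟨v, rfl⟩ ⟨u, rfl⟩ (Ne.symm hceq) (cell_spec G hc hcl v).2
    have hvpar : v ∈ par G (cell G u) :=
      point_unique G hc hcl ⟨u, rfl⟩ hTu (by rw [← hu1]; exact h) hvout
    exact hparity (real_mem_eq G hc hcl (par_real G hc hcl ⟨u, rfl⟩ hTu).1 ⟨v, rfl⟩
      hvpar (cell_spec G hc hcl v).2)
  · by_cases hwu : w ∈ cell G u
    · have hwoutv : w ∉ cell G v :=
        not_mem_of_ne G hc hcl ⟨u, rfl⟩ ⟨v, rfl⟩ hceq hwu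
      have hwpar : w ∈ par G (cell G v) :=
        point_unique G hc hcl ⟨v, rfl⟩ hTv (by rw [← hv1]; exact h2.symm) hwoutv
      exact hparity' (real_mem_eq G hc hcl (par_real G hc hcl ⟨v, rfl⟩ hTv).1 ⟨u, rfl⟩
        hwpar hwu)
    · by_cases hwv : w ∈ cell G v
      · have hwpar : w ∈ par G (cell G u) :=
          point_unique G hc hcl ⟨u, rfl⟩ hTu (by rw [← hu1]; exact h1) hwu
        exact hparity (real_mem_eq G hc hcl (par_real G hc hcl ⟨u, rfl⟩ hTu).1 ⟨v, rfl⟩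
          hwpar hwv)
      · have hwpu : w ∈ par G (cell G u) :=
          point_unique G hc hcl ⟨u, rfl⟩ hTu (by rw [← hu1]; exact h1) hwu
        have hwpv : w ∈ par G (cell G v) :=
          point_unique G hc hcl ⟨v, rfl⟩ hTv (by rw [← hv1]; exact h2.symm) hwv
        have hPeq : par G (cell G u) = par G (cell G v) :=
          real_mem_eq G hc hcl (par_real G hc hcl ⟨u, rfl⟩ hTu).1
            (par_real G hc hcl ⟨v, rfl⟩ hTv).1 hwpu hwpv
        have hcw : cell G w = par G (cell G u) :=
          cell_of_mem G hc hcl (par_real G hc hcl ⟨u, rfl⟩ hTu).1 hwpu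
        have huout : u ∉ cell G w := by
          rw [hcw]
          exact not_mem_of_ne G hc hcl ⟨u, rfl⟩ (par_real G hc hcl ⟨u, rfl⟩ hTu).1
            (par_real G hc hcl ⟨u, rfl⟩ hTu).2 (cell_spec G hc hcl u).2
        have hvout : v ∉ cell G w := by
          rw [hcw, hPeq]
          exact not_mem_of_ne G hc hcl ⟨v, rfl⟩ (par_real G hc hcl ⟨v, rfl⟩ hTv).1
            (par_real G hc hcl ⟨v, rfl⟩ hTv).2 (cell_spec G hc hcl v).2
        exact hne (extUniq G hc hcl h1.symm h2 huout hvout)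

lemma Bconflict (hc : IsCubic G) (hcl : ClawFree G) {u v : V} {i : Bool}
    (hu : Bcol G u = some i) (hv : Bcol G v = some i) (hne : u ≠ v)
    (h : G.Adj u v ∨ ∃ w, G.Adj u w ∧ G.Adj w v) : False := by
  have hsymm : G.Adj v u ∨ ∃ w, G.Adj v w ∧ G.Adj w u := by
    rcases h with h | ⟨w, h1, h2⟩
    · exact Or.inl h.symm
    · exact Or.inr ⟨w, h2.symm, h1.symm⟩
  rcases (cell_spec G hc hcl u).1 with hKu | hDu | hTu
  · exact conflict_k4side G hc hcl hu hv hne hKu h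
  · exact conflict_diaside G hc hcl hu hv hne hDu h
  · rcases (cell_spec G hc hcl v).1 with hKv | hDv | hTv
    · exact conflict_k4side G hc hcl hv hu hne.symm hKv hsymm
    · exact conflict_diaside G hc hcl hv hu hne.symm hDv hsymm
    · exact conflict_tritri G hc hcl hu hv hne hTu hTv h

end NE

end P1122

theorem stmt_2 {V : Type*} [Fintype V] (G : SimpleGraph V) [DecidableRel G.Adj]
    (hcubic : IsCubic G) (hclaw : ClawFree G) :
    ∃ A₁ A₂ B₁ B₂ : Set V,
      A₁ ∪ A₂ ∪ B₁ ∪ B₂ = Set.univ ∧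
      ([A₁, A₂, B₁, B₂] : List (Set V)).Pairwise Disjoint ∧
      IndepSet G A₁ ∧ IndepSet G A₂ ∧ TwoPacking G B₁ ∧ TwoPacking G B₂ := by
  cases isEmpty_or_nonempty V with
  | inl hV =>
    refine ⟨∅, ∅, ∅, ∅, ?_, ?_, ?_, ?_, ?_, ?_⟩
    · ext v; exact absurd trivial (IsEmpty.elim hV v)
    · simp
    · intro u hu; exact absurd hu (by simp)
    · intro u hu; exact absurd hu (by simp)
    · intro u hu; exact absurd hu (by simp)
    · intro u hu; exact absurd hu (by simp)
  | inr hV =>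
    refine ⟨{v | P1122.Bcol G v = none ∧ P1122.phi G v}, {v | P1122.Bcol G v = none ∧ ¬ P1122.phi G v},
      {v | P1122.Bcol G v = some false}, {v | P1122.Bcol G v = some true}, ?_, ?_, ?_, ?_, ?_, ?_⟩
    · ext v
      simp only [Set.mem_union, Set.mem_setOf_eq, Set.mem_univ, iff_true]
      rcases h : P1122.Bcol G v with - | b
      · by_cases hp : P1122.phi G v
        · exact Or.inl (Or.inl (Or.inl ⟨rfl, hp⟩))
        · exact Or.inl (Or.inl (Or.inr ⟨rfl, hp⟩))
      · cases b
        · exact Or.inl (Or.inr rfl)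
        · exact Or.inr rfl
    · have key : ∀ v : V, ∀ s t : Set V,
          (s = {v | P1122.Bcol G v = none ∧ P1122.phi G v} ∨ s = {v | P1122.Bcol G v = none ∧ ¬ P1122.phi G v} ∨
            s = {v | P1122.Bcol G v = some false} ∨ s = {v | P1122.Bcol G v = some true}) → True := by
        intro _ _ _ _; trivial
      refine List.Pairwise.cons ?_ (List.Pairwise.cons ?_ (List.Pairwise.cons ?_ (by simp)))
      · intro s hs
        simp only [List.mem_cons, List.not_mem_nil, or_false] at hs
        rw [Set.disjoint_left]
        rcases hs with rfl | rfl | rfl <;> rintro v ⟨h1, h2⟩ h3 <;>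
          simp only [Set.mem_setOf_eq] at h3 <;> simp_all
      · intro s hs
        simp only [List.mem_cons, List.not_mem_nil, or_false] at hs
        rw [Set.disjoint_left]
        rcases hs with rfl | rfl <;> rintro v ⟨h1, h2⟩ h3 <;>
          simp only [Set.mem_setOf_eq] at h3 <;> simp_all
      · intro s hs
        simp only [List.mem_cons, List.not_mem_nil, or_false] at hs
        rw [Set.disjoint_left]
        rcases hs with rfl <;> rintro v h2 h3 <;>
          simp only [Set.mem_setOf_eq] at h3 h2 <;> simp_all
    · intro u hu v hv hadj
      simp only [Set.mem_setOf_eq] at hu hv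
      have := P1122.phi_proper G hcubic hclaw ⟨hadj, hu.1, hv.1⟩
      tauto
    · intro u hu v hv hadj
      simp only [Set.mem_setOf_eq] at hu hv
      have := P1122.phi_proper G hcubic hclaw ⟨hadj, hu.1, hv.1⟩
      tauto
    · intro u hu v hv hne
      refine P1122.two_lt_edist G hne ?_ ?_
      · intro hadj; exact P1122.Bconflict G hcubic hclaw hu hv hne (Or.inl hadj)
      · intro w h1 h2; exact P1122.Bconflict G hcubic hclaw hu hv hne (Or.inr ⟨w, h1, h2⟩)
    · intro u hu v hv hne
      refine P1122.two_lt_edist G hne ?_ ?_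
      · intro hadj; exact P1122.Bconflict G hcubic hclaw hu hv hne (Or.inl hadj)
      · intro w h1 h2; exact P1122.Bconflict G hcubic hclaw hu hv hne (Or.inr ⟨w, h1, h2⟩)
end
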